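/- arXiv:1906.06182 — 8 statements merged into one kernel-verified Lean document; each statement's English description precedes it below -/
import Mathlib

section
/- Let L : ℝ × ℝ × ℝ × ℝ → ℝ, (t,x,v,S) ↦ L(t,x,v,S), be of class C². Let a < b, s_a, x_a, x_b ∈ ℝ, let x* : [a,b] → ℝ be of class C² with x*(a) = x_a, x*(b) = x_b, and let S* : [a,b] → ℝ be of class C¹ with S*'(t) = L(t, x*(t), x*'(t), S*(t)) and S*(a) = s_a. Suppose x* is a maximizer: for every C² function x : [a,b] → ℝ with x(a) = x_a, x(b) = x_b and every C¹ function S : [a,b] → ℝ satisfying S'(t) = L(t, x(t), x'(t), S(t)) on [a,b] with S(a) = s_a, one has S(b) ≤ S*(b). Then for all t ∈ [a,b]: (∂L/∂x)(t, x*(t), x*'(t), S*(t)) − (d/dt)[(∂L/∂v)(t, x*(t), x*'(t), S*(t))] + (∂L/∂S)(t, x*(t), x*'(t), S*(t)) · (∂L/∂v)(t, x*(t), x*'(t), S*(t)) = 0 (the generalized Euler–Lagrange equation of Herglotz). -/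
/-- The partial derivative `∂L/∂x` of a Lagrangian `L(t,x,v,S)`. -/
noncomputable def Lx (L : ℝ × ℝ × ℝ × ℝ → ℝ) (t x v S : ℝ) : ℝ :=
  deriv (fun y => L (t, y, v, S)) x

/-- The partial derivative `∂L/∂v` of a Lagrangian `L(t,x,v,S)`. -/
noncomputable def Lv (L : ℝ × ℝ × ℝ × ℝ → ℝ) (t x v S : ℝ) : ℝ :=
  deriv (fun w => L (t, x, w, S)) v

/-- The partial derivative `∂L/∂S` of a Lagrangian `L(t,x,v,S)`. -/
noncomputable def LS (L : ℝ × ℝ × ℝ × ℝ → ℝ) (t x v S : ℝ) : ℝ :=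
  deriv (fun u => L (t, x, v, u)) S

open Set Metric intervalIntegral

noncomputable section HerglotzAux

/-- curve along the extremal -/
def ppH (xs Ss : ℝ → ℝ) (t : ℝ) : ℝ × ℝ × ℝ × ℝ := (t, xs t, deriv xs t, Ss t)

def AAH (L : ℝ × ℝ × ℝ × ℝ → ℝ) (xs Ss : ℝ → ℝ) (t : ℝ) : ℝ :=
  fderiv ℝ L (ppH xs Ss t) (0, 1, 0, 0)

def BBH (L : ℝ × ℝ × ℝ × ℝ → ℝ) (xs Ss : ℝ → ℝ) (t : ℝ) : ℝ :=
  fderiv ℝ L (ppH xs Ss t) (0, 0, 1, 0)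

def CCH (L : ℝ × ℝ × ℝ × ℝ → ℝ) (xs Ss : ℝ → ℝ) (t : ℝ) : ℝ :=
  fderiv ℝ L (ppH xs Ss t) (0, 0, 0, 1)

def EEH (L : ℝ × ℝ × ℝ × ℝ → ℝ) (xs Ss : ℝ → ℝ) (t : ℝ) : ℝ :=
  AAH L xs Ss t - deriv (BBH L xs Ss) t + CCH L xs Ss t * BBH L xs Ss t

variable {L : ℝ × ℝ × ℝ × ℝ → ℝ}

lemma hasDerivAt_sect2 (hL : Differentiable ℝ L) (t x v S : ℝ) :
    HasDerivAt (fun y => L (t, y, v, S)) (fderiv ℝ L (t, x, v, S) (0, 1, 0, 0)) x := by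
  have hinner : HasDerivAt (fun y : ℝ => ((t, y, v, S) : ℝ × ℝ × ℝ × ℝ))
      ((0 : ℝ), (1 : ℝ), (0 : ℝ), (0 : ℝ)) x :=
    (hasDerivAt_const x t).prodMk ((hasDerivAt_id x).prodMk
      ((hasDerivAt_const x v).prodMk (hasDerivAt_const x S)))
  exact (hL _).hasFDerivAt.comp_hasDerivAt x hinner

lemma hasDerivAt_sect3 (hL : Differentiable ℝ L) (t x v S : ℝ) :
    HasDerivAt (fun w => L (t, x, w, S)) (fderiv ℝ L (t, x, v, S) (0, 0, 1, 0)) v := by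
  have hinner : HasDerivAt (fun w : ℝ => ((t, x, w, S) : ℝ × ℝ × ℝ × ℝ))
      ((0 : ℝ), (0 : ℝ), (1 : ℝ), (0 : ℝ)) v :=
    (hasDerivAt_const v t).prodMk ((hasDerivAt_const v x).prodMk
      ((hasDerivAt_id v).prodMk (hasDerivAt_const v S)))
  exact (hL _).hasFDerivAt.comp_hasDerivAt v hinner

lemma hasDerivAt_sect4 (hL : Differentiable ℝ L) (t x v S : ℝ) :
    HasDerivAt (fun u => L (t, x, v, u)) (fderiv ℝ L (t, x, v, S) (0, 0, 0, 1)) S := by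
  have hinner : HasDerivAt (fun u : ℝ => ((t, x, v, u) : ℝ × ℝ × ℝ × ℝ))
      ((0 : ℝ), (0 : ℝ), (0 : ℝ), (1 : ℝ)) S :=
    (hasDerivAt_const S t).prodMk ((hasDerivAt_const S x).prodMk
      ((hasDerivAt_const S v).prodMk (hasDerivAt_id S)))
  exact (hL _).hasFDerivAt.comp_hasDerivAt S hinner

lemma fderiv_apply_comb (D : ℝ × ℝ × ℝ × ℝ →L[ℝ] ℝ) (u v w : ℝ) :
    D (0, u, v, w) = u * D (0, 1, 0, 0) + v * D (0, 0, 1, 0) + w * D (0, 0, 0, 1) := by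
  have h : ((0 : ℝ), u, v, w) =
      u • ((0 : ℝ), (1 : ℝ), (0 : ℝ), (0 : ℝ)) + v • ((0 : ℝ), (0 : ℝ), (1 : ℝ), (0 : ℝ))
        + w • ((0 : ℝ), (0 : ℝ), (0 : ℝ), (1 : ℝ)) := by
    simp [Prod.ext_iff]
  rw [h, map_add, map_add, map_smul, map_smul, map_smul, smul_eq_mul, smul_eq_mul, smul_eq_mul]

lemma hasDerivAt_primitive {f : ℝ → ℝ} (hf : Continuous f) (a t : ℝ) :
    HasDerivAt (fun u => ∫ s in a..u, f s) (f t) t :=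
  intervalIntegral.integral_hasDerivAt_right (hf.intervalIntegrable _ _)
    (hf.stronglyMeasurableAtFilter _ _) hf.continuousAt

lemma norm_four (pq : ℝ × ℝ × ℝ × ℝ) :
    ‖pq‖ = max |pq.1| (max |pq.2.1| (max |pq.2.2.1| |pq.2.2.2|)) := by
  simp [Prod.norm_def, Real.norm_eq_abs]

lemma clamp_contract (lo hi x y : ℝ) :
    |max lo (min hi x) - max lo (min hi y)| ≤ |x - y| := by
  calc |max lo (min hi x) - max lo (min hi y)|
      = |max (min hi x) lo - max (min hi y) lo| := by rw [max_comm lo, max_comm lo]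
    _ ≤ |min hi x - min hi y| := abs_max_sub_max_le_abs _ _ _
    _ ≤ max |hi - hi| |x - y| := abs_min_sub_min_le_max _ _ _ _
    _ = |x - y| := by simp

lemma deriv_contDiff_one {f : ℝ → ℝ} (hf : ContDiff ℝ 2 f) : ContDiff ℝ 1 (deriv f) := by
  rw [show (2 : WithTop ℕ∞) = 1 + 1 from by norm_num] at hf
  exact (contDiff_succ_iff_deriv.mp hf).2.2

variable {L : ℝ × ℝ × ℝ × ℝ → ℝ} {xs Ss : ℝ → ℝ}

lemma contDiff_ppH (hxs : ContDiff ℝ 2 xs) (hSs : ContDiff ℝ 1 Ss) :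
    ContDiff ℝ 1 (ppH xs Ss) :=
  contDiff_id.prodMk ((hxs.of_le (by norm_num)).prodMk ((deriv_contDiff_one hxs).prodMk hSs))

lemma contDiff_fderiv_apply (hL : ContDiff ℝ 2 L) (e : ℝ × ℝ × ℝ × ℝ)
    (hxs : ContDiff ℝ 2 xs) (hSs : ContDiff ℝ 1 Ss) :
    ContDiff ℝ 1 (fun t => fderiv ℝ L (ppH xs Ss t) e) :=
  (((hL.fderiv_right (by norm_num)).comp (contDiff_ppH hxs hSs)).clm_apply contDiff_const)

lemma contDiff_BBH (hL : ContDiff ℝ 2 L) (hxs : ContDiff ℝ 2 xs) (hSs : ContDiff ℝ 1 Ss) :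
    ContDiff ℝ 1 (BBH L xs Ss) := contDiff_fderiv_apply hL _ hxs hSs

lemma continuous_EEH (hL : ContDiff ℝ 2 L) (hxs : ContDiff ℝ 2 xs) (hSs : ContDiff ℝ 1 Ss) :
    Continuous (EEH L xs Ss) := by
  have hA := (contDiff_fderiv_apply hL ((0:ℝ),(1:ℝ),(0:ℝ),(0:ℝ)) hxs hSs).continuous
  have hB := (contDiff_BBH hL hxs hSs).continuous
  have hC := (contDiff_fderiv_apply hL ((0:ℝ),(0:ℝ),(0:ℝ),(1:ℝ)) hxs hSs).continuous
  have hB' := (contDiff_one_iff_deriv.mp (contDiff_BBH hL hxs hSs)).2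
  exact (hA.sub hB').add (hC.mul hB)

/-- positivity of the integral against a bump function -/
lemma bump_integral_pos {F : ℝ → ℝ} (hF : Continuous F) {a b t0 δ : ℝ} (hδ : 0 < δ)
    (h1 : a ≤ t0 - δ) (h2 : t0 + δ ≤ b) {η : ℝ → ℝ} (hηc : Continuous η)
    (hη0 : ∀ s, 0 ≤ η s) (hsupp : ∀ s, s ∉ Metric.ball t0 δ → η s = 0)
    (hone : ∀ s ∈ Icc (t0 - δ/2) (t0 + δ/2), η s = 1)
    (hpos : ∀ s ∈ Metric.ball t0 δ, 0 < F s) :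
    0 < ∫ s in a..b, F s * η s := by
  have hFη : Continuous (fun s => F s * η s) := hF.mul hηc
  have hnn : ∀ s, 0 ≤ F s * η s := by
    intro s
    by_cases hs : s ∈ Metric.ball t0 δ
    · exact mul_nonneg (hpos s hs).le (hη0 s)
    · rw [hsupp s hs]; ring_nf; exact le_refl 0
  have hI1 : (0:ℝ) ≤ ∫ s in a..(t0 - δ/2), F s * η s :=
    intervalIntegral.integral_nonneg (by linarith) (fun u _ => hnn u)
  have hI3 : (0:ℝ) ≤ ∫ s in (t0 + δ/2)..b, F s * η s :=
    intervalIntegral.integral_nonneg (by linarith) (fun u _ => hnn u)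
  -- middle part
  obtain ⟨s0, hs0mem, hs0min⟩ := isCompact_Icc.exists_isMinOn
    (nonempty_Icc.mpr (by linarith : t0 - δ/2 ≤ t0 + δ/2)) hF.continuousOn
  have hballs : Icc (t0 - δ/2) (t0 + δ/2) ⊆ Metric.ball t0 δ := by
    intro s hs
    rw [Metric.mem_ball, Real.dist_eq, abs_lt]
    constructor <;> [linarith [hs.1, hs.2]; linarith [hs.1, hs.2]]
  have hs0pos : 0 < F s0 := hpos s0 (hballs hs0mem)
  have hmid : δ * F s0 ≤ ∫ s in (t0 - δ/2)..(t0 + δ/2), F s * η s := by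
    have := intervalIntegral.integral_mono_on (μ := MeasureTheory.volume)
      (f := fun _ => F s0) (g := fun s => F s * η s) (by linarith : t0 - δ/2 ≤ t0 + δ/2)
      (intervalIntegrable_const) (hFη.intervalIntegrable _ _)
      (fun u hu => by rw [hone u hu, mul_one]; exact hs0min hu)
    rw [intervalIntegral.integral_const, smul_eq_mul] at this
    calc δ * F s0 = (t0 + δ/2 - (t0 - δ/2)) * F s0 := by ring_nf
      _ ≤ _ := this
  have hsplit1 : (∫ s in a..(t0 - δ/2), F s * η s) + (∫ s in (t0 - δ/2)..b, F s * η s)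
      = ∫ s in a..b, F s * η s :=
    intervalIntegral.integral_add_adjacent_intervals (hFη.intervalIntegrable _ _)
      (hFη.intervalIntegrable _ _)
  have hsplit2 : (∫ s in (t0 - δ/2)..(t0 + δ/2), F s * η s)
      + (∫ s in (t0 + δ/2)..b, F s * η s) = ∫ s in (t0 - δ/2)..b, F s * η s :=
    intervalIntegral.integral_add_adjacent_intervals (hFη.intervalIntegrable _ _)
      (hFη.intervalIntegrable _ _)
  nlinarith [mul_pos hδ hs0pos]


lemma taylor_remainder (hL : ContDiff ℝ 2 L) {ρ Kd : ℝ}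
    (hKd : ∀ q₁ ∈ closedBall (0 : ℝ × ℝ × ℝ × ℝ) (ρ + 1),
      ∀ q₂ ∈ closedBall (0 : ℝ × ℝ × ℝ × ℝ) (ρ + 1),
      ‖fderiv ℝ L q₁ - fderiv ℝ L q₂‖ ≤ Kd * ‖q₁ - q₂‖)
    {q h : ℝ × ℝ × ℝ × ℝ} (hq : ‖q‖ ≤ ρ) (hh : ‖h‖ ≤ 1) (hKd0 : 0 ≤ Kd) :
    |L (q + h) - L q - fderiv ℝ L q h| ≤ Kd * ‖h‖ ^ 2 := by
  have hLd : Differentiable ℝ L := hL.differentiable (by norm_num)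
  set D := fderiv ℝ L with hD
  set φ : ℝ → ℝ := fun s => L (q + s • h) - s * D q h with hφ
  have hmem : ∀ s ∈ Icc (0:ℝ) 1, q + s • h ∈ closedBall (0 : ℝ × ℝ × ℝ × ℝ) (ρ + 1) := by
    intro s hs
    rw [mem_closedBall_zero_iff]
    have h1 : ‖q + s • h‖ ≤ ‖q‖ + ‖s • h‖ := norm_add_le _ _
    have h2 : ‖s • h‖ = |s| * ‖h‖ := by rw [norm_smul, Real.norm_eq_abs]
    have h3 : |s| ≤ 1 := abs_le.mpr ⟨by linarith [hs.1], hs.2⟩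
    nlinarith [norm_nonneg h, abs_nonneg s]
  have hqmem : q ∈ closedBall (0 : ℝ × ℝ × ℝ × ℝ) (ρ + 1) := by
    rw [mem_closedBall_zero_iff]; linarith
  have hφd : ∀ s ∈ Icc (0:ℝ) 1,
      HasDerivWithinAt φ (D (q + s • h) h - D q h) (Icc 0 1) s := by
    intro s _
    have hinner : HasDerivAt (fun s : ℝ => q + s • h) h s := by
      simpa using ((hasDerivAt_id s).smul_const h).const_add q
    have h1 : HasDerivAt (fun s : ℝ => L (q + s • h)) (D (q + s • h) h) s :=
      (hLd _).hasFDerivAt.comp_hasDerivAt s hinner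
    have h2 : HasDerivAt (fun s : ℝ => s * D q h) (D q h) s := by
      simpa using (hasDerivAt_id s).mul_const (D q h)
    exact (h1.sub h2).hasDerivWithinAt
  have hbound : ∀ s ∈ Icc (0:ℝ) 1, ‖D (q + s • h) h - D q h‖ ≤ Kd * ‖h‖ ^ 2 := by
    intro s hs
    have h3 : |s| ≤ 1 := abs_le.mpr ⟨by linarith [hs.1], hs.2⟩
    have e1 : D (q + s • h) h - D q h = (D (q + s • h) - D q) h := by
      rw [ContinuousLinearMap.sub_apply]
    rw [e1]
    calc ‖(D (q + s • h) - D q) h‖ ≤ ‖D (q + s • h) - D q‖ * ‖h‖ :=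
          (D (q + s • h) - D q).le_opNorm h
      _ ≤ (Kd * ‖q + s • h - q‖) * ‖h‖ := by
          gcongr
          exact hKd _ (hmem s hs) _ hqmem
      _ = Kd * (|s| * ‖h‖) * ‖h‖ := by
          rw [add_sub_cancel_left, norm_smul, Real.norm_eq_abs]
      _ = |s| * (Kd * ‖h‖ ^ 2) := by ring
      _ ≤ 1 * (Kd * ‖h‖ ^ 2) := mul_le_mul_of_nonneg_right h3 (by positivity)
      _ = Kd * ‖h‖ ^ 2 := one_mul _
  have key := Convex.norm_image_sub_le_of_norm_hasDerivWithin_le hφd hbound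
    (convex_Icc 0 1) (⟨le_refl 0, zero_le_one⟩ : (0:ℝ) ∈ Icc (0:ℝ) 1)
    (⟨zero_le_one, le_refl 1⟩ : (1:ℝ) ∈ Icc (0:ℝ) 1)
  have e0 : φ 0 = L q := by simp [hφ]
  have e1 : φ 1 = L (q + h) - D q h := by simp [hφ]
  rw [e0, e1] at key
  have : ‖L (q + h) - D q h - L q‖ ≤ Kd * ‖h‖ ^ 2 := by
    simpa using key
  rw [Real.norm_eq_abs] at this
  calc |L (q + h) - L q - D q h| = |L (q + h) - D q h - L q| := by ring_nf
    _ ≤ Kd * ‖h‖ ^ 2 := this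

end HerglotzAux

lemma eps_choice (Mh Mw C3 W : ℝ) (hMh1 : 1 ≤ Mh) (hMw0 : 0 ≤ Mw) (hC30 : 0 ≤ C3)
    (hW : 0 < W) :
    ∃ e : ℝ, 0 < e ∧ e ≤ 1 ∧ e * Mh ≤ 1 ∧ e * (Mw + C3) ≤ 1 ∧ C3 * e ^ 2 < e * W := by
  refine ⟨min (min 1 (1 / (Mh + 1))) (min (1 / (Mw + C3 + 1)) (W / (C3 + 1))), ?_,
    le_trans (min_le_left _ _) (min_le_left _ _), ?_, ?_, ?_⟩
  all_goals
    have hq1 : (0:ℝ) < 1 / (Mh + 1) := by positivity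
    have hq2 : (0:ℝ) < 1 / (Mw + C3 + 1) := by positivity
    have hq3 : (0:ℝ) < W / (C3 + 1) := by positivity
    have h0 : 0 < min (min 1 (1 / (Mh + 1))) (min (1 / (Mw + C3 + 1)) (W / (C3 + 1))) :=
      lt_min (lt_min one_pos hq1) (lt_min hq2 hq3)
  · exact h0
  · have h1 : min (min 1 (1 / (Mh + 1))) (min (1 / (Mw + C3 + 1)) (W / (C3 + 1)))
        ≤ 1 / (Mh + 1) := le_trans (min_le_left _ _) (min_le_right _ _)
    have h2 := (le_div_iff₀ (by linarith : (0:ℝ) < Mh + 1)).mp h1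
    nlinarith
  · have h1 : min (min 1 (1 / (Mh + 1))) (min (1 / (Mw + C3 + 1)) (W / (C3 + 1)))
        ≤ 1 / (Mw + C3 + 1) := le_trans (min_le_right _ _) (min_le_left _ _)
    have h2 := (le_div_iff₀ (by linarith : (0:ℝ) < Mw + C3 + 1)).mp h1
    nlinarith
  · have h1 : min (min 1 (1 / (Mh + 1))) (min (1 / (Mw + C3 + 1)) (W / (C3 + 1)))
        ≤ W / (C3 + 1) := le_trans (min_le_right _ _) (min_le_right _ _)
    have h2 := (le_div_iff₀ (by linarith : (0:ℝ) < C3 + 1)).mp h1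
    nlinarith [mul_pos h0 h0]

set_option maxHeartbeats 3000000 in
lemma herglotz_key
    (L : ℝ × ℝ × ℝ × ℝ → ℝ) (hL : ContDiff ℝ 2 L)
    (a b sa xa xb : ℝ) (hab : a < b)
    (xstar : ℝ → ℝ) (hxstar : ContDiff ℝ 2 xstar)
    (hxa : xstar a = xa) (hxb : xstar b = xb)
    (Sstar : ℝ → ℝ) (hSstar : ContDiff ℝ 1 Sstar)
    (hSeq : ∀ t ∈ Set.Icc a b,
      HasDerivAt Sstar (L (t, xstar t, deriv xstar t, Sstar t)) t)
    (hSa : Sstar a = sa)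
    (hmax : ∀ x : ℝ → ℝ, ContDiff ℝ 2 x → x a = xa → x b = xb →
      ∀ S : ℝ → ℝ, ContDiff ℝ 1 S →
        (∀ t ∈ Set.Icc a b, HasDerivAt S (L (t, x t, deriv x t, S t)) t) →
        S a = sa → S b ≤ Sstar b)
    (t0 : ℝ) (ht0 : t0 ∈ Set.Ioo a b) (hEne : EEH L xstar Sstar t0 ≠ 0) : False := by
  have hLd : Differentiable ℝ L := hL.differentiable (by norm_num)
  have hxsd : Differentiable ℝ xstar := hxstar.differentiable (by norm_num)
  set Af := AAH L xstar Sstar with hAf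
  set Bf := BBH L xstar Sstar with hBf
  set Cf := CCH L xstar Sstar with hCf
  have hAc : Continuous Af := (contDiff_fderiv_apply hL _ hxstar hSstar).continuous
  have hB1 : ContDiff ℝ 1 Bf := contDiff_BBH hL hxstar hSstar
  have hBc : Continuous Bf := hB1.continuous
  have hB'c : Continuous (deriv Bf) := (contDiff_one_iff_deriv.mp hB1).2
  have hBd : Differentiable ℝ Bf := (contDiff_one_iff_deriv.mp hB1).1
  have hCc : Continuous Cf := (contDiff_fderiv_apply hL _ hxstar hSstar).continuous
  have hEc : Continuous (EEH L xstar Sstar) := continuous_EEH hL hxstar hSstar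
  have hEE : ∀ s, EEH L xstar Sstar s = Af s - deriv Bf s + Cf s * Bf s := fun s => rfl
  -- the integrating factor z
  set z : ℝ → ℝ := fun t => Real.exp (-∫ s in a..t, Cf s) with hzdef
  have hzpos : ∀ t, 0 < z t := fun t => Real.exp_pos _
  have hzd : ∀ t, HasDerivAt z (-Cf t * z t) t := by
    intro t
    have h1 : HasDerivAt (fun u => ∫ s in a..u, Cf s) (Cf t) t := hasDerivAt_primitive hCc a t
    have h2 := h1.neg.exp
    simpa [hzdef, mul_comm] using h2
  have hzc : Continuous z := by
    have : Differentiable ℝ z := fun t => (hzd t).differentiableAt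
    exact this.continuous
  -- choose δ
  set F : ℝ → ℝ := fun s => z s * EEH L xstar Sstar s with hFdef
  have hFc : Continuous F := hzc.mul hEc
  have hF0 : F t0 ≠ 0 := mul_ne_zero (hzpos t0).ne' hEne
  have hr : 0 < |F t0| / 2 := by
    have := abs_pos.mpr hF0; linarith only [this]
  obtain ⟨δ1, hδ1pos, hδ1⟩ := Metric.continuousAt_iff.mp hFc.continuousAt (|F t0| / 2) hr
  set δ := min δ1 (min (t0 - a) (b - t0)) / 2 with hδdef
  have hta : 0 < t0 - a := by have := ht0.1; linarith only [this]
  have htb : 0 < b - t0 := by have := ht0.2; linarith only [this]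
  have hδpos : 0 < δ := by
    apply div_pos _ (by norm_num)
    exact lt_min hδ1pos (lt_min hta htb)
  have hδa : a ≤ t0 - δ := by
    have h1 : min δ1 (min (t0 - a) (b - t0)) ≤ t0 - a :=
      le_trans (min_le_right _ _) (min_le_left _ _)
    rw [hδdef]; linarith only [h1, hta]
  have hδb : t0 + δ ≤ b := by
    have h1 : min δ1 (min (t0 - a) (b - t0)) ≤ b - t0 :=
      le_trans (min_le_right _ _) (min_le_right _ _)
    rw [hδdef]; linarith only [h1, htb]
  have hδ1' : δ < δ1 := by
    have h1 : min δ1 (min (t0 - a) (b - t0)) ≤ δ1 := min_le_left _ _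
    have h2 : 0 < min δ1 (min (t0 - a) (b - t0)) := lt_min hδ1pos (lt_min hta htb)
    rw [hδdef]; linarith only [h1, h2]
  have hsign : ∀ s ∈ Metric.ball t0 δ, |F s - F t0| < |F t0| / 2 := by
    intro s hs
    have h1 : dist s t0 < δ1 := lt_trans (Metric.mem_ball.mp hs) hδ1'
    have := hδ1 h1
    rwa [Real.dist_eq] at this
  -- bump function
  set η : ContDiffBump t0 := ⟨δ/2, δ, by positivity, by linarith only [hδpos]⟩ with hηdef
  have hη2 : ContDiff ℝ 2 (η : ℝ → ℝ) := by exact_mod_cast η.contDiff (n := 2)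
  have hηc : Continuous (η : ℝ → ℝ) := hη2.continuous
  have hηd : ∀ s, HasDerivAt (η : ℝ → ℝ) (deriv (η : ℝ → ℝ) s) s :=
    fun s => ((hη2.differentiable (by norm_num)) s).hasDerivAt
  have hη'c : Continuous (deriv (η : ℝ → ℝ)) := (deriv_contDiff_one hη2).continuous
  have hη0 : ∀ s, 0 ≤ (η : ℝ → ℝ) s := fun s => η.nonneg
  have hη1 : ∀ s, (η : ℝ → ℝ) s ≤ 1 := fun s => η.le_one
  have hηsupp : ∀ s, s ∉ Metric.ball t0 δ → (η : ℝ → ℝ) s = 0 := by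
    intro s hs
    by_contra hne
    have h1 : s ∈ Function.support (η : ℝ → ℝ) := Function.mem_support.mpr hne
    rw [η.support_eq] at h1
    exact hs h1
  have hηone : ∀ s ∈ Set.Icc (t0 - δ/2) (t0 + δ/2), (η : ℝ → ℝ) s = 1 := by
    intro s hs
    apply η.one_of_mem_closedBall
    rw [Metric.mem_closedBall, Real.dist_eq, abs_le,
      show η.rIn = δ / 2 from rfl]
    exact ⟨by linarith only [hs.1], by linarith only [hs.2]⟩
  have hηa : (η : ℝ → ℝ) a = 0 := by
    apply hηsupp
    rw [Metric.mem_ball, Real.dist_eq, abs_lt]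
    push_neg
    intro h'
    linarith only [h', hδa]
  have hηb : (η : ℝ → ℝ) b = 0 := by
    apply hηsupp
    rw [Metric.mem_ball, Real.dist_eq, abs_lt]
    push_neg
    intro h'
    linarith only [h', hδb]
  -- the first variation w
  set G : ℝ → ℝ := fun s => z s * (Af s * (η : ℝ → ℝ) s + Bf s * deriv (η : ℝ → ℝ) s) with hGdef
  have hGc : Continuous G := hzc.mul ((hAc.mul hηc).add (hBc.mul hη'c))
  set w : ℝ → ℝ := fun t => (z t)⁻¹ * ∫ s in a..t, G s with hwdef
  have hId : ∀ t, HasDerivAt (fun u => ∫ s in a..u, G s) (G t) t := hasDerivAt_primitive hGc a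
  have hwd : ∀ t, HasDerivAt w
      (Cf t * w t + (Af t * (η : ℝ → ℝ) t + Bf t * deriv (η : ℝ → ℝ) t)) t := by
    intro t
    have hzne := (hzpos t).ne'
    have h1 : HasDerivAt (fun u => (z u)⁻¹) (-(-Cf t * z t) / (z t) ^ 2) t := (hzd t).inv hzne
    have h2 : HasDerivAt (fun u => (z u)⁻¹ * ∫ s in a..u, G s) _ t := h1.mul (hId t)
    convert h2 using 1
    simp only [hwdef, hGdef]
    field_simp
  have hw0 : w a = 0 := by simp [hwdef]
  have hwc : Continuous w := by
    have : Differentiable ℝ w := fun t => (hwd t).differentiableAt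
    exact this.continuous
  -- integration by parts
  have hderB : ∀ t, HasDerivAt Bf (deriv Bf t) t := fun t => (hBd t).hasDerivAt
  have hpartGF : ∀ t, HasDerivAt (fun s => z s * Bf s * (η : ℝ → ℝ) s)
      (G t - F t * (η : ℝ → ℝ) t) t := by
    intro t
    have h2 : HasDerivAt (fun s => z s * Bf s * (η : ℝ → ℝ) s) _ t :=
      ((hzd t).mul (hderB t)).mul (hηd t)
    convert h2 using 1
    simp only [hGdef, hFdef, hEE, Pi.mul_apply]
    ring
  have hsub : ∫ s in a..b, (G s - F s * (η : ℝ → ℝ) s)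
      = z b * Bf b * (η : ℝ → ℝ) b - z a * Bf a * (η : ℝ → ℝ) a := by
    apply intervalIntegral.integral_eq_sub_of_hasDerivAt (fun t _ => hpartGF t)
    exact (hGc.sub (hFc.mul hηc)).intervalIntegrable _ _
  have hc1 : ∫ s in a..b, G s = ∫ s in a..b, F s * (η : ℝ → ℝ) s := by
    have h2 : ∫ s in a..b, (G s - F s * (η : ℝ → ℝ) s) = 0 := by
      rw [hsub, hηa, hηb]; ring
    rw [intervalIntegral.integral_sub (f := G) (g := fun s => F s * (η : ℝ → ℝ) s) (hGc.intervalIntegrable _ _)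
      ((hFc.mul hηc).intervalIntegrable _ _)] at h2
    linarith
  -- sign of ∫ F η
  have hIF : (∫ s in a..b, F s * (η : ℝ → ℝ) s) ≠ 0 := by
    rcases hF0.lt_or_gt with hneg | hpos
    · have hp := bump_integral_pos (F := fun s => -F s) hFc.neg hδpos hδa hδb hηc hη0
        hηsupp hηone (fun s hs => by
          have h' := (abs_lt.mp (hsign s hs)).2
          rw [abs_of_neg hneg] at h'
          simp only [neg_pos]
          linarith only [h', hneg])
      have heq : ∫ s in a..b, -F s * (η : ℝ → ℝ) s = -∫ s in a..b, F s * (η : ℝ → ℝ) s := by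
        rw [← intervalIntegral.integral_neg]
        congr 1; funext s; ring
      rw [heq] at hp
      intro h0; rw [h0] at hp; simp at hp
    · have hp := bump_integral_pos hFc hδpos hδa hδb hηc hη0 hηsupp hηone
        (fun s hs => by
          have h' := (abs_lt.mp (hsign s hs)).1
          rw [abs_of_pos hpos] at h'
          linarith only [h', hpos])
      exact hp.ne'
  have hwbne : w b ≠ 0 := by
    have : w b = (z b)⁻¹ * ∫ s in a..b, G s := rfl
    rw [this, hc1]
    exact mul_ne_zero (inv_ne_zero (hzpos b).ne') hIF
  -- Stage B: constants
  set pf := ppH xstar Sstar with hpf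
  have hpc : Continuous pf := (contDiff_ppH hxstar hSstar).continuous
  obtain ⟨Mp, hMp⟩ := isCompact_Icc.exists_bound_of_continuousOn
    (hpc.continuousOn : ContinuousOn pf (Set.Icc a b))
  have hMp0 : 0 ≤ Mp := le_trans (norm_nonneg _) (hMp a ⟨le_refl a, hab.le⟩)
  obtain ⟨ρ, hρ⟩ : ∃ x : ℝ, x = Mp + 1 := ⟨_, rfl⟩
  set Q := Metric.closedBall (0 : ℝ × ℝ × ℝ × ℝ) (ρ + 1) with hQ
  have hQc : IsCompact Q := isCompact_closedBall _ _
  have hρ1 : (0:ℝ) ≤ ρ + 1 := by rw [hρ]; linarith only [hMp0]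
  obtain ⟨C0, hC0⟩ := hQc.exists_bound_of_continuousOn hL.continuous.continuousOn
  have hC00 : 0 ≤ C0 := le_trans (norm_nonneg _) (hC0 0 (Metric.mem_closedBall_self hρ1))
  obtain ⟨KL, hKLb⟩ := hQc.exists_bound_of_continuousOn
    (hL.continuous_fderiv (by norm_num)).continuousOn
  have hKL0 : 0 ≤ KL := le_trans (norm_nonneg _)
    (hKLb 0 (Metric.mem_closedBall_self hρ1))
  have hLip : ∀ q1 ∈ Q, ∀ q2 ∈ Q, |L q1 - L q2| ≤ KL * ‖q1 - q2‖ := by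
    intro q1 h1 q2 h2
    have := Convex.norm_image_sub_le_of_norm_fderiv_le
      (fun x _ => (hLd x)) hKLb (convex_closedBall _ _) h2 h1
    simpa [Real.norm_eq_abs] using this
  have hfd1 : ContDiff ℝ 1 (fderiv ℝ L) := hL.fderiv_right (by norm_num)
  obtain ⟨Kd, hKdb⟩ := hQc.exists_bound_of_continuousOn
    (hfd1.continuous_fderiv (by norm_num)).continuousOn
  have hKd0 : 0 ≤ Kd := le_trans (norm_nonneg _)
    (hKdb 0 (Metric.mem_closedBall_self hρ1))
  have hDlip : ∀ q1 ∈ Metric.closedBall (0 : ℝ × ℝ × ℝ × ℝ) (ρ + 1),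
      ∀ q2 ∈ Metric.closedBall (0 : ℝ × ℝ × ℝ × ℝ) (ρ + 1),
      ‖fderiv ℝ L q1 - fderiv ℝ L q2‖ ≤ Kd * ‖q1 - q2‖ := by
    intro q1 h1 q2 h2
    exact Convex.norm_image_sub_le_of_norm_fderiv_le
      (fun x _ => (hfd1.differentiable (by norm_num)) x) hKdb (convex_closedBall _ _) h2 h1
  obtain ⟨Mn, hMn⟩ := isCompact_Icc.exists_bound_of_continuousOn
    (hηc.continuousOn : ContinuousOn (η : ℝ → ℝ) (Set.Icc a b))
  obtain ⟨Mn', hMn'⟩ := isCompact_Icc.exists_bound_of_continuousOn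
    (hη'c.continuousOn : ContinuousOn (deriv (η : ℝ → ℝ)) (Set.Icc a b))
  obtain ⟨Mw, hMwb⟩ := isCompact_Icc.exists_bound_of_continuousOn
    (hwc.continuousOn : ContinuousOn w (Set.Icc a b))
  have hMw0 : 0 ≤ Mw := le_trans (norm_nonneg _) (hMwb a ⟨le_refl a, hab.le⟩)
  obtain ⟨Mh, hMhdef⟩ : ∃ x : ℝ, x = max 1 (max (max Mn Mn') Mw) := ⟨_, rfl⟩
  have hMh1 : (1:ℝ) ≤ Mh := by rw [hMhdef]; exact le_max_left _ _
  have hMnh : Mn ≤ Mh := by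
    rw [hMhdef]
    exact le_trans (le_trans (le_max_left _ _) (le_max_left _ _)) (le_max_right _ _)
  have hMn'h : Mn' ≤ Mh := by
    rw [hMhdef]
    exact le_trans (le_trans (le_max_right _ _) (le_max_left _ _)) (le_max_right _ _)
  have hMwh : Mw ≤ Mh := by
    rw [hMhdef]
    exact le_trans (le_max_right _ _) (le_max_right _ _)
  have hcomp : ∀ t ∈ Set.Icc a b,
      |t| ≤ Mp ∧ |xstar t| ≤ Mp ∧ |deriv xstar t| ≤ Mp ∧ |Sstar t| ≤ Mp := by
    intro t ht
    have h := hMp t ht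
    rw [show pf t = (t, xstar t, deriv xstar t, Sstar t) from rfl, norm_four] at h
    simp only at h
    exact ⟨le_trans (le_max_left _ _) h,
      le_trans (le_trans (le_max_left _ _) (le_max_right _ _)) h,
      le_trans (le_trans (le_trans (le_max_left _ _) (le_max_right _ _)) (le_max_right _ _)) h,
      le_trans (le_trans (le_trans (le_max_right _ _) (le_max_right _ _)) (le_max_right _ _)) h⟩
  -- Gronwall constants
  obtain ⟨KK, hKKdef⟩ : ∃ x : ℝ, x = KL + 1 := ⟨_, rfl⟩
  have hKK : 0 < KK := by rw [hKKdef]; linarith only [hKL0]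
  obtain ⟨Gb, hGbdef⟩ : ∃ x : ℝ, x = (Real.exp (KK * (b - a)) - 1) / KK := ⟨_, rfl⟩
  have hGb0 : 0 ≤ Gb := by
    rw [hGbdef]
    apply div_nonneg _ hKK.le
    have : (1:ℝ) ≤ Real.exp (KK * (b - a)) :=
      Real.one_le_exp (mul_nonneg hKK.le (by linarith only [hab]))
    linarith only [this]
  obtain ⟨C2, hC2def⟩ : ∃ x : ℝ, x = Kd * Mh ^ 2 := ⟨_, rfl⟩
  have hC20 : 0 ≤ C2 := by rw [hC2def]; exact mul_nonneg hKd0 (sq_nonneg _)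
  obtain ⟨C3, hC3def⟩ : ∃ x : ℝ, x = C2 * Gb := ⟨_, rfl⟩
  have hC30 : 0 ≤ C3 := by rw [hC3def]; exact mul_nonneg hC20 hGb0
  -- choice of ε
  obtain ⟨Wb, hWbdef⟩ : ∃ x : ℝ, x = w b := ⟨_, rfl⟩
  have hWbpos : 0 < |Wb| := by rw [hWbdef]; exact abs_pos.mpr hwbne
  obtain ⟨e, he0, he1, heMh, heW, hgain⟩ :=
    eps_choice Mh Mw C3 |Wb| hMh1 hMw0 hC30 hWbpos
  obtain ⟨ε, hεdef⟩ : ∃ x : ℝ, x = if 0 < Wb then e else -e := ⟨_, rfl⟩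
  have hεabs : |ε| = e := by
    rw [hεdef]
    split_ifs
    · exact abs_of_pos he0
    · rw [abs_neg]; exact abs_of_pos he0
  have hεW : ε * Wb = e * |Wb| := by
    rcases hwbne.lt_or_gt with hn | hp
    · have hn' : Wb < 0 := by rw [hWbdef]; exact hn
      rw [hεdef, if_neg (by linarith only [hn'] : ¬ 0 < Wb), abs_of_neg hn']
      ring
    · have hp' : 0 < Wb := by rw [hWbdef]; exact hp
      rw [hεdef, if_pos hp', abs_of_pos hp']
  -- the varied curve
  set xε : ℝ → ℝ := fun t => xstar t + ε * (η : ℝ → ℝ) t with hxεdef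
  have hxε2 : ContDiff ℝ 2 xε := hxstar.add (contDiff_const.mul hη2)
  have hxεc : Continuous xε := hxε2.continuous
  set dxε : ℝ → ℝ := fun t => deriv xstar t + ε * deriv (η : ℝ → ℝ) t with hdxεdef
  have hdx : ∀ t, HasDerivAt xε (dxε t) t :=
    fun t => ((hxsd t).hasDerivAt).add ((hηd t).const_mul ε)
  have hderiv_xε : deriv xε = dxε := funext fun t => (hdx t).deriv
  have hdxεc : Continuous dxε :=
    ((deriv_contDiff_one hxstar).continuous).add (continuous_const.mul hη'c)
  set Wf : ℝ → ℝ := fun t => Sstar t + ε * w t with hWfdef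
  have hWfc : Continuous Wf := hSstar.continuous.add (continuous_const.mul hwc)
  have hW' : ∀ t ∈ Set.Icc a b, HasDerivAt Wf
      (L (pf t) + ε * (Cf t * w t + (Af t * (η : ℝ → ℝ) t + Bf t * deriv (η : ℝ → ℝ) t))) t :=
    fun t ht => (hSeq t ht).add ((hwd t).const_mul ε)
  -- clamping
  set cS : ℝ → ℝ := fun S => max (-(Mp + 1)) (min (Mp + 1) S) with hcSdef
  set cT : ℝ → ℝ := fun t => max a (min b t) with hcTdef
  have hcTicc : ∀ t, cT t ∈ Set.Icc a b :=
    fun t => ⟨le_max_left _ _, max_le hab.le (min_le_left _ _)⟩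
  have hcTid : ∀ t ∈ Set.Icc a b, cT t = t := by
    intro t ht
    rw [hcTdef]
    simp only
    rw [min_eq_right ht.2, max_eq_right ht.1]
  have hcSid : ∀ S : ℝ, |S| ≤ Mp + 1 → cS S = S := by
    intro S hS
    rw [hcSdef]
    simp only
    rw [min_eq_right (abs_le.mp hS).2, max_eq_right (abs_le.mp hS).1]
  have hcSabs : ∀ S : ℝ, |cS S| ≤ Mp + 1 := by
    intro S
    rw [abs_le]
    constructor
    · exact le_max_left _ _
    · exact max_le (by linarith only [hMp0]) (min_le_left _ _)
  have hcSlip : ∀ S1 S2 : ℝ, |cS S1 - cS S2| ≤ |S1 - S2| :=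
    fun S1 S2 => clamp_contract _ _ _ _
  have hcTc : Continuous cT := continuous_const.max (continuous_const.min continuous_id)
  have hcSc : Continuous cS := continuous_const.max (continuous_const.min continuous_id)
  -- the truncated vector field
  set vf : ℝ → ℝ → ℝ := fun t S => L (cT t, xε (cT t), dxε (cT t), cS S) with hvfdef
  have hxεb : ∀ t ∈ Set.Icc a b, |xε t| ≤ Mp + 1 := by
    intro t ht
    have h1 := (hcomp t ht).2.1
    have h2 : |(η : ℝ → ℝ) t| ≤ Mn := by
      have := hMn t ht; rwa [Real.norm_eq_abs] at this
    have h3 : |ε * (η : ℝ → ℝ) t| = e * |(η : ℝ → ℝ) t| := by rw [abs_mul, hεabs]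
    have h4 : e * |(η : ℝ → ℝ) t| ≤ e * Mh :=
      mul_le_mul_of_nonneg_left (le_trans h2 hMnh) he0.le
    calc |xε t| ≤ |xstar t| + |ε * (η : ℝ → ℝ) t| := abs_add_le _ _
      _ ≤ Mp + 1 := by rw [h3]; linarith only [h1, h4, heMh]
  have hdxεb : ∀ t ∈ Set.Icc a b, |dxε t| ≤ Mp + 1 := by
    intro t ht
    have h1 := (hcomp t ht).2.2.1
    have h2 : |deriv (η : ℝ → ℝ) t| ≤ Mn' := by
      have := hMn' t ht; rwa [Real.norm_eq_abs] at this
    have h3 : |ε * deriv (η : ℝ → ℝ) t| = e * |deriv (η : ℝ → ℝ) t| := by rw [abs_mul, hεabs]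
    have h4 : e * |deriv (η : ℝ → ℝ) t| ≤ e * Mh :=
      mul_le_mul_of_nonneg_left (le_trans h2 hMn'h) he0.le
    calc |dxε t| ≤ |deriv xstar t| + |ε * deriv (η : ℝ → ℝ) t| := abs_add_le _ _
      _ ≤ Mp + 1 := by rw [h3]; linarith only [h1, h4, heMh]
  have hQmem : ∀ (t S : ℝ), ((cT t, xε (cT t), dxε (cT t), cS S) : ℝ × ℝ × ℝ × ℝ) ∈ Q := by
    intro t S
    have ht' := hcTicc t
    rw [hQ, mem_closedBall_zero_iff, norm_four]
    simp only
    have h1 := (hcomp (cT t) ht').1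
    have h2 := hxεb (cT t) ht'
    have h3 := hdxεb (cT t) ht'
    have h4 := hcSabs S
    rw [hρ]
    apply max_le (by linarith only [h1, hMp0])
    apply max_le (by linarith only [h2])
    exact max_le (by linarith only [h3]) (by linarith only [h4])
  set KN : NNReal := Real.toNNReal KK with hKNdef
  have hKNcoe : (KN : ℝ) = KK := Real.coe_toNNReal _ hKK.le
  have hnorm_last : ∀ x : ℝ, ‖((0 : ℝ), (0 : ℝ), (0 : ℝ), x)‖ = |x| := by
    intro x
    rw [norm_four]
    simp [max_eq_right (abs_nonneg x)]
  have hvLip : ∀ t, LipschitzWith KN (vf t) := by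
    intro t
    rw [lipschitzWith_iff_dist_le_mul]
    intro S1 S2
    rw [Real.dist_eq, Real.dist_eq, hKNcoe]
    have h1 := hLip _ (hQmem t S1) _ (hQmem t S2)
    have h2 : ((cT t, xε (cT t), dxε (cT t), cS S1) : ℝ × ℝ × ℝ × ℝ)
        - (cT t, xε (cT t), dxε (cT t), cS S2) = (0, 0, 0, cS S1 - cS S2) := by
      simp [Prod.ext_iff]
    rw [h2, hnorm_last] at h1
    have h3 := hcSlip S1 S2
    have habs : 0 ≤ |S1 - S2| := abs_nonneg _
    calc |vf t S1 - vf t S2| ≤ KL * |cS S1 - cS S2| := h1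
      _ ≤ KL * |S1 - S2| := mul_le_mul_of_nonneg_left h3 hKL0
      _ ≤ KK * |S1 - S2| := by
          rw [hKKdef]
          exact mul_le_mul_of_nonneg_right (by linarith only []) (abs_nonneg _)
  -- Picard-Lindelof existence
  have hPL : IsPicardLindelof vf (tmin := a) (tmax := b) ⟨a, le_refl a, hab.le⟩ sa
      (Real.toNNReal (C0 * (b - a) + 1)) 0 (Real.toNNReal C0) KN := by
    refine ⟨fun t _ => (hvLip t).lipschitzOnWith,
      ?_, fun t _ x _ => le_trans (hC0 _ (hQmem t x)) (Real.le_coe_toNNReal C0), ?_⟩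
    · intro x _
      have : Continuous fun t => vf t x :=
        hL.continuous.comp (hcTc.prodMk ((hxεc.comp hcTc).prodMk
          ((hdxεc.comp hcTc).prodMk continuous_const)))
      exact this.continuousOn
    · show ((Real.toNNReal C0 : NNReal) : ℝ) * max (b - a) (a - a)
        ≤ ((Real.toNNReal (C0 * (b - a) + 1) : NNReal) : ℝ) - ((0 : NNReal) : ℝ)
      rw [NNReal.coe_zero, sub_zero, Real.coe_toNNReal _ hC00,
        Real.coe_toNNReal _ (by linarith only [mul_nonneg hC00 (sub_nonneg.mpr hab.le)])]
      rw [sub_self, max_eq_left (sub_nonneg.mpr hab.le)]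
      linarith only []
  obtain ⟨St, hSta', hStd⟩ := hPL.exists_eq_forall_mem_Icc_hasDerivWithinAt₀
  have hSta : St a = sa := hSta'
  have hStc : ContinuousOn St (Set.Icc a b) := fun t ht => (hStd t ht).continuousWithinAt
  -- W is an approximate solution
  set εf := C2 * e ^ 2 with hεfdef
  have hWapprox : ∀ t ∈ Set.Ico a b,
      dist (L (pf t) + ε * (Cf t * w t + (Af t * (η : ℝ → ℝ) t + Bf t * deriv (η : ℝ → ℝ) t)))
        (vf t (Wf t)) ≤ εf := by
    intro t ht
    have hti : t ∈ Set.Icc a b := Set.Ico_subset_Icc_self ht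
    have hwt : |w t| ≤ Mw := by have := hMwb t hti; rwa [Real.norm_eq_abs] at this
    have hWt_b : |Wf t| ≤ Mp + 1 := by
      have h1 := (hcomp t hti).2.2.2
      have h2 : |ε * w t| = e * |w t| := by rw [abs_mul, hεabs]
      have h3 : e * |w t| ≤ e * Mh := mul_le_mul_of_nonneg_left (le_trans hwt hMwh) he0.le
      calc |Wf t| ≤ |Sstar t| + |ε * w t| := abs_add_le _ _
        _ ≤ Mp + 1 := by rw [h2]; linarith only [h1, h3, heMh]
    have hvW : vf t (Wf t) = L (t, xε t, dxε t, Wf t) := by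
      rw [hvfdef]
      simp only
      rw [hcTid t hti, hcSid _ hWt_b]
    set hv : ℝ × ℝ × ℝ × ℝ := (0, ε * (η : ℝ → ℝ) t, ε * deriv (η : ℝ → ℝ) t, ε * w t)
      with hhv
    have hsum : pf t + hv = (t, xε t, dxε t, Wf t) := by
      rw [hhv, show pf t = (t, xstar t, deriv xstar t, Sstar t) from rfl]
      simp [Prod.ext_iff, hxεdef, hdxεdef, hWfdef]
    have hnh : ‖hv‖ ≤ e * Mh := by
      rw [hhv, norm_four]
      simp only
      have k0 : |(0:ℝ)| = 0 := abs_zero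
      have k1 : |ε * (η : ℝ → ℝ) t| ≤ e * Mh := by
        rw [abs_mul, hεabs]
        apply mul_le_mul_of_nonneg_left _ he0.le
        have := hMn t hti; rw [Real.norm_eq_abs] at this; exact le_trans this hMnh
      have k2 : |ε * deriv (η : ℝ → ℝ) t| ≤ e * Mh := by
        rw [abs_mul, hεabs]
        apply mul_le_mul_of_nonneg_left _ he0.le
        have := hMn' t hti; rw [Real.norm_eq_abs] at this; exact le_trans this hMn'h
      have k3 : |ε * w t| ≤ e * Mh := by
        rw [abs_mul, hεabs]
        apply mul_le_mul_of_nonneg_left _ he0.le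
        exact le_trans hwt hMwh
      have k4 : (0:ℝ) ≤ e * Mh := by positivity
      rw [k0]
      exact max_le k4 (max_le k1 (max_le k2 k3))
    have hnh1 : ‖hv‖ ≤ 1 := le_trans hnh heMh
    have hq : ‖pf t‖ ≤ ρ := le_trans (hMp t hti) (by rw [hρ]; linarith only [])
    have htr := taylor_remainder hL hDlip hq hnh1 hKd0
    have hDh : fderiv ℝ L (pf t) hv =
        ε * (η : ℝ → ℝ) t * Af t + ε * deriv (η : ℝ → ℝ) t * Bf t + ε * w t * Cf t :=
      fderiv_apply_comb _ _ _ _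
    rw [Real.dist_eq, hvW, ← hsum]
    have heq : L (pf t) + ε * (Cf t * w t + (Af t * (η : ℝ → ℝ) t + Bf t * deriv (η : ℝ → ℝ) t))
        - L (pf t + hv) = -(L (pf t + hv) - L (pf t) - fderiv ℝ L (pf t) hv) := by
      rw [hDh]; ring
    rw [heq, abs_neg]
    calc |L (pf t + hv) - L (pf t) - fderiv ℝ L (pf t) hv| ≤ Kd * ‖hv‖ ^ 2 := htr
      _ ≤ Kd * (e * Mh) ^ 2 := by
          apply mul_le_mul_of_nonneg_left _ hKd0
          exact pow_le_pow_left₀ (norm_nonneg _) hnh 2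
      _ = εf := by rw [hεfdef, hC2def]; ring
  have hGron : ∀ t ∈ Set.Icc a b, dist (Wf t) (St t) ≤ gronwallBound 0 (KN : ℝ) (εf + 0) (t - a) := by
    apply dist_le_of_approx_trajectories_ODE hvLip hWfc.continuousOn
      (fun t ht => ((hW' t (Set.Ico_subset_Icc_self ht)).hasDerivWithinAt))
      hWapprox hStc
      (fun t ht => (hStd t (Set.Ico_subset_Icc_self ht)).mono_of_mem_nhdsWithin
        (Icc_mem_nhdsGE_of_mem ht))
      (fun t _ => by rw [dist_self])
    have : Wf a = sa := by rw [hWfdef]; simp only; rw [hw0, hSa]; ring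
    rw [this, hSta, dist_self]
  have hgb : ∀ t ∈ Set.Icc a b, gronwallBound 0 (KN : ℝ) (εf + 0) (t - a) ≤ C3 * e ^ 2 := by
    intro t ht
    rw [hKNcoe, gronwallBound_of_K_ne_0 hKK.ne', add_zero]
    simp only [zero_mul, zero_add]
    have h1 : Real.exp (KK * (t - a)) - 1 ≤ Real.exp (KK * (b - a)) - 1 := by
      have := Real.exp_le_exp.mpr (mul_le_mul_of_nonneg_left (by linarith only [ht.2] : t - a ≤ b - a) hKK.le)
      linarith only [this]
    have h2 : (0:ℝ) ≤ Real.exp (KK * (t - a)) - 1 := by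
      have := Real.one_le_exp (mul_nonneg hKK.le (by linarith only [ht.1] : (0:ℝ) ≤ t - a))
      linarith only [this]
    have h3 : 0 ≤ εf / KK := div_nonneg (by positivity) hKK.le
    calc εf / KK * (Real.exp (KK * (t - a)) - 1)
        ≤ εf / KK * (Real.exp (KK * (b - a)) - 1) := mul_le_mul_of_nonneg_left h1 h3
      _ = C3 * e ^ 2 := by rw [hC3def, hGbdef, hεfdef]; ring
  have hclose : ∀ t ∈ Set.Icc a b, |St t - Wf t| ≤ C3 * e ^ 2 := by
    intro t ht
    have := le_trans (hGron t ht) (hgb t ht)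
    rwa [dist_comm, Real.dist_eq] at this
  -- the tube estimate
  have htube : ∀ t ∈ Set.Icc a b, |St t - Sstar t| ≤ 1 := by
    intro t ht
    have h1 := hclose t ht
    have h2 : |Wf t - Sstar t| = e * |w t| := by
      rw [hWfdef]; simp only; rw [add_sub_cancel_left, abs_mul, hεabs]
    have h3 : |w t| ≤ Mw := by have := hMwb t ht; rwa [Real.norm_eq_abs] at this
    have h4 : C3 * e ^ 2 ≤ C3 * e := by
      nlinarith only [mul_nonneg (mul_nonneg hC30 he0.le) (sub_nonneg.mpr he1)]
    have h5 : |St t - Sstar t| ≤ |St t - Wf t| + |Wf t - Sstar t| := abs_sub_le _ _ _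
    have h6 : e * |w t| ≤ e * Mw := mul_le_mul_of_nonneg_left h3 he0.le
    nlinarith only [h1, h2, h4, h5, h6, heW]
  have hStb : ∀ t ∈ Set.Icc a b, |St t| ≤ Mp + 1 := by
    intro t ht
    have h1 := htube t ht
    have h2 := (hcomp t ht).2.2.2
    calc |St t| = |(St t - Sstar t) + Sstar t| := by ring_nf
      _ ≤ |St t - Sstar t| + |Sstar t| := abs_add_le _ _
      _ ≤ Mp + 1 := by linarith only [h1, h2]
  have hvSt : ∀ t ∈ Set.Icc a b, vf t (St t) = L (t, xε t, dxε t, St t) := by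
    intro t ht
    rw [hvfdef]
    simp only
    rw [hcTid t ht, hcSid _ (hStb t ht)]
  -- extension of St to ℝ
  set Sf : ℝ → ℝ := fun t => St (cT t) + (t - cT t) * vf (cT t) (St (cT t)) with hSfdef
  set gd : ℝ → ℝ := fun t => vf (cT t) (St (cT t)) with hgddef
  have hSfIcc : ∀ s ∈ Set.Icc a b, Sf s = St s := by
    intro s hs
    rw [hSfdef]
    simp only
    rw [hcTid s hs, sub_self, zero_mul, add_zero]
  have hcTlow : ∀ s, s ≤ a → cT s = a := by
    intro s hs
    rw [hcTdef]
    simp only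
    rw [min_eq_right (le_trans hs hab.le), max_eq_left hs]
  have hcThigh : ∀ s, b ≤ s → cT s = b := by
    intro s hs
    rw [hcTdef]
    simp only
    rw [min_eq_left hs, max_eq_right hab.le]
  set k1 := vf a (St a) with hk1def
  set k2 := vf b (St b) with hk2def
  have hSflow : ∀ s, s ≤ a → Sf s = St a + (s - a) * k1 := by
    intro s hs
    rw [hSfdef]
    simp only
    rw [hcTlow s hs]
  have hSfhigh : ∀ s, b ≤ s → Sf s = St b + (s - b) * k2 := by
    intro s hs
    rw [hSfdef]
    simp only
    rw [hcThigh s hs]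
  have haffd : ∀ (c k p x : ℝ), HasDerivAt (fun s => c + (s - p) * k) k x := by
    intro c k p x
    simpa using (((hasDerivAt_id x).sub_const p).mul_const k).const_add c
  have hgda : gd a = k1 := by rw [hgddef]; simp only; rw [hcTid a ⟨le_refl a, hab.le⟩]
  have hgdb : gd b = k2 := by rw [hgddef]; simp only; rw [hcTid b ⟨hab.le, le_refl b⟩]
  have hSfd : ∀ t, HasDerivAt Sf (gd t) t := by
    intro t
    rcases lt_trichotomy t a with hlt | heq | hgt
    · have hev : Sf =ᶠ[nhds t] fun s => St a + (s - a) * k1 :=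
        Filter.eventuallyEq_of_mem (Iio_mem_nhds hlt) (fun s hs => hSflow s (le_of_lt hs))
      have := (haffd (St a) k1 a t).congr_of_eventuallyEq hev
      have hgdt : gd t = k1 := by rw [hgddef]; simp only; rw [hcTlow t hlt.le]
      rwa [← hgdt] at this
    · subst heq
      have hIci : HasDerivWithinAt Sf k1 (Set.Ici t) t := by
        have h0 : HasDerivWithinAt St (vf t (St t)) (Set.Icc t b) t := hStd t ⟨le_refl t, hab.le⟩
        have h1 : HasDerivWithinAt Sf (vf t (St t)) (Set.Icc t b) t :=
          h0.congr (fun s hs => hSfIcc s hs) (hSfIcc t ⟨le_refl t, hab.le⟩)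
        exact h1.mono_of_mem_nhdsWithin (Icc_mem_nhdsGE_of_mem ⟨le_refl t, hab⟩)
      have hIic : HasDerivWithinAt Sf k1 (Set.Iic t) t := by
        refine ((haffd (St t) k1 t t).hasDerivWithinAt).congr
          (fun s hs => hSflow s hs) ?_
        rw [hSflow t (le_refl t)]
      have hu := hIic.union hIci
      rw [Set.Iic_union_Ici] at hu
      have := hasDerivWithinAt_univ.mp hu
      rwa [← hgda] at this
    · rcases lt_trichotomy t b with hlt2 | heq2 | hgt2
      · have hto : t ∈ Set.Ioo a b := ⟨hgt, hlt2⟩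
        have h0 : HasDerivAt St (vf t (St t)) t :=
          (hStd t (Set.Ioo_subset_Icc_self hto)).hasDerivAt (Icc_mem_nhds hgt hlt2)
        have hev : Sf =ᶠ[nhds t] St :=
          Filter.eventuallyEq_of_mem (Ioo_mem_nhds hgt hlt2)
            (fun s hs => hSfIcc s (Set.Ioo_subset_Icc_self hs))
        have := h0.congr_of_eventuallyEq hev
        have hgdt : gd t = vf t (St t) := by
          rw [hgddef]; simp only; rw [hcTid t (Set.Ioo_subset_Icc_self hto)]
        rwa [← hgdt] at this
      · subst heq2
        have hIic : HasDerivWithinAt Sf k2 (Set.Iic t) t := by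
          have h0 : HasDerivWithinAt St (vf t (St t)) (Set.Icc a t) t := hStd t ⟨hab.le, le_refl t⟩
          have h1 : HasDerivWithinAt Sf (vf t (St t)) (Set.Icc a t) t :=
            h0.congr (fun s hs => hSfIcc s hs) (hSfIcc t ⟨hab.le, le_refl t⟩)
          exact h1.mono_of_mem_nhdsWithin (Icc_mem_nhdsLE_of_mem ⟨hab, le_refl t⟩)
        have hIci : HasDerivWithinAt Sf k2 (Set.Ici t) t := by
          refine ((haffd (St t) k2 t t).hasDerivWithinAt).congr
            (fun s hs => hSfhigh s hs) ?_
          rw [hSfhigh t (le_refl t)]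
        have hu := hIic.union hIci
        rw [Set.Iic_union_Ici] at hu
        have := hasDerivWithinAt_univ.mp hu
        rwa [← hgdb] at this
      · have hev : Sf =ᶠ[nhds t] fun s => St b + (s - b) * k2 :=
          Filter.eventuallyEq_of_mem (Ioi_mem_nhds hgt2) (fun s hs => hSfhigh s (le_of_lt hs))
        have := (haffd (St b) k2 b t).congr_of_eventuallyEq hev
        have hgdt : gd t = k2 := by rw [hgddef]; simp only; rw [hcThigh t hgt2.le]
        rwa [← hgdt] at this
  have hgd_eq : gd = fun t => L (cT t, xε (cT t), dxε (cT t), cS (St (cT t))) := by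
    funext t
    rw [hgddef]
    simp only [hvfdef]
    rw [hcTid _ (hcTicc t)]
  have hgdc : Continuous gd := by
    rw [hgd_eq]
    have h1 : Continuous fun t => St (cT t) := hStc.comp_continuous hcTc hcTicc
    exact hL.continuous.comp (hcTc.prodMk ((hxεc.comp hcTc).prodMk
      ((hdxεc.comp hcTc).prodMk (hcSc.comp h1))))
  have hSfC1 : ContDiff ℝ 1 Sf := by
    rw [contDiff_one_iff_deriv]
    refine ⟨fun t => (hSfd t).differentiableAt, ?_⟩
    rw [show deriv Sf = gd from funext fun t => (hSfd t).deriv]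
    exact hgdc
  -- apply maximality
  have hxεa : xε a = xa := by rw [hxεdef]; simp only; rw [hηa, hxa]; ring
  have hxεb2 : xε b = xb := by rw [hxεdef]; simp only; rw [hηb, hxb]; ring
  have hodes : ∀ t ∈ Set.Icc a b, HasDerivAt Sf (L (t, xε t, deriv xε t, Sf t)) t := by
    intro t ht
    have h1 := hSfd t
    have h2 : gd t = L (t, xε t, dxε t, St t) := by
      rw [hgddef]; simp only; rw [hcTid t ht]; exact hvSt t ht
    rw [hderiv_xε, hSfIcc t ht]
    rwa [h2] at h1
  have hSfa : Sf a = sa := by rw [hSfIcc a ⟨le_refl a, hab.le⟩, hSta]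
  have hfinal := hmax xε hxε2 hxεa hxεb2 Sf hSfC1 hodes hSfa
  rw [hSfIcc b ⟨hab.le, le_refl b⟩] at hfinal
  have h5 := hclose b ⟨hab.le, le_refl b⟩
  have h6 : Wf b = Sstar b + ε * Wb := by rw [hWfdef, hWbdef]
  have h7 := (abs_le.mp h5).1
  rw [h6] at h7
  -- St b - (Sstar b + ε * Wb) ≥ -(C3 e²); ε Wb = e|Wb| > C3 e²
  linarith only [hfinal, h7, hεW, hgain]


/-- **Generalized Euler–Lagrange equation of Herglotz.** If `x*` maximizes `S(b)` over the
Herglotz variational problem `S' = L(t, x, x', S)`, `S a = s_a`, with fixed endpoints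
`x a = x_a`, `x b = x_b`, then along `x*` one has
`∂L/∂x − d/dt (∂L/∂v) + (∂L/∂S)·(∂L/∂v) = 0` on `[a,b]`. -/
theorem herglotz_generalized_euler_lagrange
    (L : ℝ × ℝ × ℝ × ℝ → ℝ) (hL : ContDiff ℝ 2 L)
    (a b sa xa xb : ℝ) (hab : a < b)
    (xstar : ℝ → ℝ) (hxstar : ContDiff ℝ 2 xstar)
    (hxa : xstar a = xa) (hxb : xstar b = xb)
    (Sstar : ℝ → ℝ) (hSstar : ContDiff ℝ 1 Sstar)
    (hSeq : ∀ t ∈ Set.Icc a b,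
      HasDerivAt Sstar (L (t, xstar t, deriv xstar t, Sstar t)) t)
    (hSa : Sstar a = sa)
    (hmax : ∀ x : ℝ → ℝ, ContDiff ℝ 2 x → x a = xa → x b = xb →
      ∀ S : ℝ → ℝ, ContDiff ℝ 1 S →
        (∀ t ∈ Set.Icc a b, HasDerivAt S (L (t, x t, deriv x t, S t)) t) →
        S a = sa → S b ≤ Sstar b) :
    ∀ t ∈ Set.Icc a b,
      Lx L t (xstar t) (deriv xstar t) (Sstar t)
        - deriv (fun τ => Lv L τ (xstar τ) (deriv xstar τ) (Sstar τ)) t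
        + LS L t (xstar t) (deriv xstar t) (Sstar t)
          * Lv L t (xstar t) (deriv xstar t) (Sstar t) = 0 := by
  have hLd : Differentiable ℝ L := hL.differentiable (by norm_num)
  have hLx : ∀ t x v S : ℝ, Lx L t x v S = fderiv ℝ L (t, x, v, S) (0, 1, 0, 0) :=
    fun t x v S => (hasDerivAt_sect2 hLd t x v S).deriv
  have hLv : ∀ t x v S : ℝ, Lv L t x v S = fderiv ℝ L (t, x, v, S) (0, 0, 1, 0) :=
    fun t x v S => (hasDerivAt_sect3 hLd t x v S).deriv
  have hLS : ∀ t x v S : ℝ, LS L t x v S = fderiv ℝ L (t, x, v, S) (0, 0, 0, 1) :=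
    fun t x v S => (hasDerivAt_sect4 hLd t x v S).deriv
  have hfun : (fun τ => Lv L τ (xstar τ) (deriv xstar τ) (Sstar τ)) = BBH L xstar Sstar :=
    funext fun τ => hLv τ _ _ _
  have hE0 : ∀ t ∈ Set.Icc a b, EEH L xstar Sstar t = 0 := by
    have hIoo : Set.EqOn (EEH L xstar Sstar) 0 (Set.Ioo a b) := by
      intro t ht
      show EEH L xstar Sstar t = 0
      by_contra hne
      exact herglotz_key L hL a b sa xa xb hab xstar hxstar hxa hxb Sstar hSstar hSeq hSa
        hmax t ht hne
    have hclos := hIoo.closure (continuous_EEH hL hxstar hSstar) continuous_const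
    intro t ht
    have h1 : t ∈ closure (Set.Ioo a b) := by rw [closure_Ioo hab.ne]; exact ht
    simpa using hclos h1
  intro t ht
  rw [hLx, hLS, hLv, hfun]
  exact hE0 t ht
end

section
/- Let m > 0, γ ∈ ℝ, let U : ℝ → ℝ be of class C¹, let x : ℝ → ℝ be of class C² satisfying m x''(t) + γ x'(t) + U'(x(t)) = 0 for all t, and let S : ℝ → ℝ be of class C¹ satisfying S'(t) = (m/2)x'(t)² − U(x(t)) − (γ/m)S(t) for all t. Then the function t ↦ ( (m/2)x'(t)² + U(x(t)) + (γ/m)S(t) ) · e^{(γ/m)t} is constant on ℝ; in particular the total energy (m/2)x'² + U(x) + (γ/m)S decays as e^{−(γ/m)t}. -/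
/-- **Exponential energy decay for the damped particle.** If `m x'' + γ x' + U'(x) = 0` and
`S' = (m/2)x'² − U(x) − (γ/m)S`, then `((m/2)x'² + U(x) + (γ/m)S)·e^{(γ/m)t}` is constant. -/
theorem damped_particle_energy_decay
    (m γ : ℝ) (hm : 0 < m)
    (U : ℝ → ℝ) (hU : ContDiff ℝ 1 U)
    (x : ℝ → ℝ) (hx : ContDiff ℝ 2 x)
    (hmotion : ∀ t, m * deriv (deriv x) t + γ * deriv x t + deriv U (x t) = 0)
    (S : ℝ → ℝ) (hS : ContDiff ℝ 1 S)
    (hSeq : ∀ t, HasDerivAt S (m / 2 * (deriv x t) ^ 2 - U (x t) - γ / m * S t) t) :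
    ∀ t₁ t₂ : ℝ,
      (m / 2 * (deriv x t₁) ^ 2 + U (x t₁) + γ / m * S t₁) * Real.exp (γ / m * t₁)
        = (m / 2 * (deriv x t₂) ^ 2 + U (x t₂) + γ / m * S t₂) * Real.exp (γ / m * t₂) := by
  have hx' : ContDiff ℝ 1 (deriv x) := by
    rw [show (2 : WithTop ℕ∞) = 1 + 1 from rfl] at hx
    exact (contDiff_succ_iff_deriv.mp hx).2.2
  have hxdiff : Differentiable ℝ x := hx.differentiable (by norm_num)
  have hUdiff : Differentiable ℝ U := hU.differentiable one_ne_zero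
  have key : ∀ t : ℝ, HasDerivAt
      (fun t => (m / 2 * (deriv x t) ^ 2 + U (x t) + γ / m * S t) * Real.exp (γ / m * t)) 0 t := by
    intro t
    have hv : HasDerivAt (deriv x) (deriv (deriv x) t) t :=
      ((hx'.differentiable one_ne_zero) t).hasDerivAt
    have hxd : HasDerivAt x (deriv x t) t := (hxdiff t).hasDerivAt
    have hUx : HasDerivAt (fun t => U (x t)) (deriv U (x t) * deriv x t) t :=
      ((hUdiff (x t)).hasDerivAt).comp t hxd
    have hE := (((hv.pow 2).const_mul (m / 2)).add hUx).add ((hSeq t).const_mul (γ / m))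
    have hexp : HasDerivAt (fun t : ℝ => Real.exp (γ / m * t)) (γ / m * Real.exp (γ / m * t)) t := by
      simpa [mul_comm] using ((hasDerivAt_id t).const_mul (γ / m)).exp
    have := hE.mul hexp
    convert this using 1
    case e'_4 => rfl
    case e'_5 => rfl
    case e'_8 => rfl
    have hdd : deriv (deriv x) t = (-(γ * deriv x t) - deriv U (x t)) / m := by
      have := hmotion t
      field_simp
      linarith
    rw [hdd]
    have hm' : m ≠ 0 := ne_of_gt hm
    simp only [Pi.add_apply, Pi.pow_apply]
    push_cast
    field_simp
    ring
  intro t₁ t₂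
  have : ∀ t, deriv (fun t => (m / 2 * (deriv x t) ^ 2 + U (x t) + γ / m * S t)
      * Real.exp (γ / m * t)) t = 0 := fun t => (key t).deriv
  exact (is_const_of_deriv_eq_zero (fun t => (key t).differentiableAt) this t₁ t₂)
end

section
/- Let d ∈ ℕ, let φ : ℝ^d → ℝ and η : ℝ^d → ℝ be of class C¹, and let ξ : ℝ^d → ℝ^d be of class C¹. Suppose there is an open interval I around 0 such that for every ε ∈ I the map Ψ_ε := id + ε ξ is a C¹ diffeomorphism of ℝ^d, and define the transformed field φ̃_ε := (φ + ε η) ∘ Ψ_ε^{-1}. Then for every x ∈ ℝ^d and every index ν ∈ {1,…,d}, the function ε ↦ (∂_ν φ̃_ε)(Ψ_ε(x)) is differentiable at ε = 0 and its derivative at ε = 0 equals ∂_ν η(x) − Σ_{μ=1}^d ∂_μ φ(x) · ∂_ν ξ^μ(x). -/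
set_option maxHeartbeats 1000000 in
/-- **Infinitesimal transformation law of the field gradient.** Under the one-parameter
family of point transformations `x̃ = x + ε ξ(x)`, `φ̃(x̃) = φ(x) + ε η(x)` (with
`Ψ_ε = id + ε ξ` a `C¹` diffeomorphism with inverse `Φ ε` for `ε` in an open interval
around `0`, and `φ̃_ε = (φ + ε η) ∘ Φ ε`), the map `ε ↦ (∂_ν φ̃_ε)(Ψ_ε x)` is
differentiable at `ε = 0` with derivative `∂_ν η(x) − Σ_μ ∂_μ φ(x) ∂_ν ξ^μ(x)`. -/
theorem gradient_infinitesimal_transformation_law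
    (d : ℕ) (φ η : (Fin d → ℝ) → ℝ) (ξ : (Fin d → ℝ) → (Fin d → ℝ))
    (hφ : ContDiff ℝ 1 φ) (hη : ContDiff ℝ 1 η) (hξ : ContDiff ℝ 1 ξ)
    (ε₁ ε₂ : ℝ) (hε₁ : ε₁ < 0) (hε₂ : 0 < ε₂)
    (Φ : ℝ → (Fin d → ℝ) → (Fin d → ℝ))
    (hdiffeo : ∀ ε ∈ Set.Ioo ε₁ ε₂, ContDiff ℝ 1 (Φ ε)
      ∧ Function.LeftInverse (Φ ε) (fun x => x + ε • ξ x)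
      ∧ Function.RightInverse (Φ ε) (fun x => x + ε • ξ x))
    (x : Fin d → ℝ) (ν : Fin d) :
    HasDerivAt
      (fun ε : ℝ =>
        fderiv ℝ (fun y => φ (Φ ε y) + ε * η (Φ ε y)) (x + ε • ξ x) (Pi.single ν 1))
      (fderiv ℝ η x (Pi.single ν 1)
        - ∑ μ, fderiv ℝ φ x (Pi.single μ 1) * fderiv ℝ (fun y => ξ y μ) x (Pi.single ν 1))
      0 := by
  classical
  have hφd : Differentiable ℝ φ := hφ.differentiable one_ne_zero
  have hηd : Differentiable ℝ η := hη.differentiable one_ne_zero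
  have hξd : Differentiable ℝ ξ := hξ.differentiable one_ne_zero
  set A : (Fin d → ℝ) →L[ℝ] (Fin d → ℝ) := fderiv ℝ ξ x with hA
  set e : (Fin d → ℝ) := Pi.single ν (1 : ℝ) with he
  -- decomposition of a CLM applied to a vector over the standard basis
  have key : ∀ (L : (Fin d → ℝ) →L[ℝ] ℝ) (w : Fin d → ℝ),
      L w = ∑ μ, w μ * L (Pi.single μ 1) := by
    intro L w
    conv_lhs => rw [← Finset.univ_sum_single w]
    rw [map_sum]
    refine Finset.sum_congr rfl fun μ _ => ?_
    have : Pi.single μ (w μ) = w μ • (Pi.single μ 1 : Fin d → ℝ) := by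
      rw [← Pi.single_smul, smul_eq_mul, mul_one]
    rw [this, map_smul, smul_eq_mul]
  -- components of A e
  have hcomp : ∀ μ, fderiv ℝ (fun y => ξ y μ) x (Pi.single ν 1) = A e μ := by
    intro μ
    have h0 : HasFDerivAt ξ A x := (hξd x).hasFDerivAt
    have hp0 := (ContinuousLinearMap.proj (R := ℝ) (φ := fun _ : Fin d => ℝ) μ).hasFDerivAt
      (x := ξ x)
    have hp : HasFDerivAt (fun z : Fin d → ℝ => z μ)
        (ContinuousLinearMap.proj (R := ℝ) (φ := fun _ : Fin d => ℝ) μ) (ξ x) := hp0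
    have h1 := hp.comp x h0
    have h1' : HasFDerivAt (fun y => ξ y μ)
        ((ContinuousLinearMap.proj (R := ℝ) (φ := fun _ : Fin d => ℝ) μ).comp A) x := h1
    rw [h1'.fderiv]; rfl
  -- the sum equals Dφ x (A e)
  have hsum : (∑ μ, fderiv ℝ φ x (Pi.single μ 1)
      * fderiv ℝ (fun y => ξ y μ) x (Pi.single ν 1)) = fderiv ℝ φ x (A e) := by
    rw [key (fderiv ℝ φ x) (A e)]
    exact Finset.sum_congr rfl fun μ _ => by rw [hcomp μ, mul_comm]
  -- the inverse curve
  have hc : HasDerivAt (fun ε : ℝ => (1 : (Fin d → ℝ) →L[ℝ] (Fin d → ℝ)) + ε • A) A 0 := by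
    simpa using ((hasDerivAt_id (0 : ℝ)).smul_const A).const_add
      (1 : (Fin d → ℝ) →L[ℝ] (Fin d → ℝ))
  have hinv : HasDerivAt
      (fun ε : ℝ => Ring.inverse ((1 : (Fin d → ℝ) →L[ℝ] (Fin d → ℝ)) + ε • A)) (-A) 0 := by
    have h0 : HasFDerivAt
        (Ring.inverse : ((Fin d → ℝ) →L[ℝ] (Fin d → ℝ)) → ((Fin d → ℝ) →L[ℝ] (Fin d → ℝ)))
        (-(ContinuousLinearMap.mulLeftRight ℝ ((Fin d → ℝ) →L[ℝ] (Fin d → ℝ))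
          ↑(1 : ((Fin d → ℝ) →L[ℝ] (Fin d → ℝ))ˣ)⁻¹
          ↑(1 : ((Fin d → ℝ) →L[ℝ] (Fin d → ℝ))ˣ)⁻¹))
        ((1 : ((Fin d → ℝ) →L[ℝ] (Fin d → ℝ))ˣ) : (Fin d → ℝ) →L[ℝ] (Fin d → ℝ)) :=
      hasFDerivAt_ringInverse (1 : ((Fin d → ℝ) →L[ℝ] (Fin d → ℝ))ˣ)
    have hc0 : ((1 : ((Fin d → ℝ) →L[ℝ] (Fin d → ℝ))ˣ) : (Fin d → ℝ) →L[ℝ] (Fin d → ℝ))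
        = (fun ε : ℝ => (1 : (Fin d → ℝ) →L[ℝ] (Fin d → ℝ)) + ε • A) 0 := by simp
    rw [hc0] at h0
    have := h0.comp_hasDerivAt 0 hc
    exact this
  -- curve of transported basis vector
  have hv : HasDerivAt
      (fun ε : ℝ => Ring.inverse ((1 : (Fin d → ℝ) →L[ℝ] (Fin d → ℝ)) + ε • A) e)
      (-(A e)) 0 := by
    have := hinv.clm_apply (hasDerivAt_const (0 : ℝ) e)
    simpa using this
  have hv0 : Ring.inverse ((1 : (Fin d → ℝ) →L[ℝ] (Fin d → ℝ)) + (0:ℝ) • A) e = e := by simp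
  -- the model function g
  have hg : HasDerivAt (fun ε : ℝ =>
      fderiv ℝ φ x (Ring.inverse ((1 : (Fin d → ℝ) →L[ℝ] (Fin d → ℝ)) + ε • A) e)
      + ε * fderiv ℝ η x (Ring.inverse ((1 : (Fin d → ℝ) →L[ℝ] (Fin d → ℝ)) + ε • A) e))
      (fderiv ℝ η x (Pi.single ν 1)
        - ∑ μ, fderiv ℝ φ x (Pi.single μ 1)
          * fderiv ℝ (fun y => ξ y μ) x (Pi.single ν 1)) 0 := by
    have h1 : HasDerivAt (fun ε : ℝ =>
        fderiv ℝ φ x (Ring.inverse ((1 : (Fin d → ℝ) →L[ℝ] (Fin d → ℝ)) + ε • A) e))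
        (fderiv ℝ φ x (-(A e))) 0 := by
      have := (hasDerivAt_const (0 : ℝ) (fderiv ℝ φ x)).clm_apply hv
      simpa using this
    have h2 : HasDerivAt (fun ε : ℝ =>
        ε * fderiv ℝ η x (Ring.inverse ((1 : (Fin d → ℝ) →L[ℝ] (Fin d → ℝ)) + ε • A) e))
        (fderiv ℝ η x e) 0 := by
      have h2' := (hasDerivAt_id (0 : ℝ)).mul
        ((hasDerivAt_const (0 : ℝ) (fderiv ℝ η x)).clm_apply hv)
      exact h2'.congr_deriv (by simp [hv0])
    have h3 := h1.add h2
    rw [hsum]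
    refine h3.congr_deriv ?_
    simp only [map_neg, he]
    ring
  -- transfer via eventual equality
  refine hg.congr_of_eventuallyEq ?_
  have hmem : Set.Ioo ε₁ ε₂ ∈ nhds (0 : ℝ) := isOpen_Ioo.mem_nhds ⟨hε₁, hε₂⟩
  filter_upwards [hmem] with ε hε
  obtain ⟨hΦc, hleft, hright⟩ := hdiffeo ε hε
  have hΦd : Differentiable ℝ (Φ ε) := hΦc.differentiable one_ne_zero
  set Ψx : (Fin d → ℝ) := x + ε • ξ x with hΨx
  set B : (Fin d → ℝ) →L[ℝ] (Fin d → ℝ) := fderiv ℝ (Φ ε) Ψx with hB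
  have hBfd : HasFDerivAt (Φ ε) B Ψx := (hΦd Ψx).hasFDerivAt
  have hΨfd : HasFDerivAt (fun y => y + ε • ξ y)
      ((1 : (Fin d → ℝ) →L[ℝ] (Fin d → ℝ)) + ε • A) x := by
    have := (hasFDerivAt_id x).add ((hξd x).hasFDerivAt.const_smul ε)
    simpa [ContinuousLinearMap.one_def] using this
  have hΦΨx : Φ ε Ψx = x := hleft x
  -- B ∘ (1 + εA) = 1
  have hBA : B.comp ((1 : (Fin d → ℝ) →L[ℝ] (Fin d → ℝ)) + ε • A) = 1 := by
    have hcompfd : HasFDerivAt (fun y => Φ ε (y + ε • ξ y))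
        (B.comp ((1 : (Fin d → ℝ) →L[ℝ] (Fin d → ℝ)) + ε • A)) x := hBfd.comp x hΨfd
    have hid : (fun y : Fin d → ℝ => Φ ε (y + ε • ξ y)) = id := funext fun y => hleft y
    rw [hid] at hcompfd
    have h := hcompfd.unique (hasFDerivAt_id x)
    rw [h, ContinuousLinearMap.one_def]
  -- (1 + εA) ∘ B = 1
  have hAB : ((1 : (Fin d → ℝ) →L[ℝ] (Fin d → ℝ)) + ε • A).comp B = 1 := by
    have hΨfd' : HasFDerivAt (fun y => y + ε • ξ y)
        ((1 : (Fin d → ℝ) →L[ℝ] (Fin d → ℝ)) + ε • A) (Φ ε Ψx) := by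
      rw [hΦΨx]; exact hΨfd
    have hcompfd : HasFDerivAt (fun y => Φ ε y + ε • ξ (Φ ε y))
        (((1 : (Fin d → ℝ) →L[ℝ] (Fin d → ℝ)) + ε • A).comp B) Ψx := hΨfd'.comp Ψx hBfd
    have hid : (fun y : Fin d → ℝ => Φ ε y + ε • ξ (Φ ε y)) = id := funext fun y => hright y
    rw [hid] at hcompfd
    have h := hcompfd.unique (hasFDerivAt_id Ψx)
    rw [h, ContinuousLinearMap.one_def]
  -- so 1 + εA is a unit with inverse B
  have hRinv : Ring.inverse ((1 : (Fin d → ℝ) →L[ℝ] (Fin d → ℝ)) + ε • A) = B := by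
    have hu : ((1 : (Fin d → ℝ) →L[ℝ] (Fin d → ℝ)) + ε • A) * B = 1 := by
      rw [ContinuousLinearMap.mul_def]; exact hAB
    have hu' : B * ((1 : (Fin d → ℝ) →L[ℝ] (Fin d → ℝ)) + ε • A) = 1 := by
      rw [ContinuousLinearMap.mul_def]; exact hBA
    exact Ring.inverse_unit ⟨(1 : (Fin d → ℝ) →L[ℝ] (Fin d → ℝ)) + ε • A, B, hu, hu'⟩
  -- compute the fderiv of the transformed field
  have hφc : HasFDerivAt (fun y => φ (Φ ε y)) ((fderiv ℝ φ x).comp B) Ψx := by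
    have := (hφd (Φ ε Ψx)).hasFDerivAt.comp Ψx hBfd
    rwa [hΦΨx] at this
  have hηc : HasFDerivAt (fun y => ε * η (Φ ε y)) (ε • ((fderiv ℝ η x).comp B)) Ψx := by
    have h := (hηd (Φ ε Ψx)).hasFDerivAt.comp Ψx hBfd
    rw [hΦΨx] at h
    exact h.const_mul ε
  have htot := (hφc.add hηc).fderiv
  rw [show (fun y => φ (Φ ε y) + ε * η (Φ ε y)) = ((fun y => φ (Φ ε y)) + fun y => ε * η (Φ ε y)) from rfl, htot, hRinv]
  simp [he]
end

section
/- Assume the Herglotz field setup and let ξ : ℝ^d → ℝ^d and η : ℝ^d → ℝ be of class C¹. Suppose φ satisfies the generalized Euler–Lagrange equation, and suppose the infinitesimal invariance condition holds: for all x, Σ_ν (∂L/∂x^ν)(z(x)) ξ^ν(x) + (∂L/∂u)(z(x)) η(x) + Σ_ν (∂L/∂p_ν)(z(x)) ( ∂_ν η(x) − Σ_μ ∂_μ φ(x) ∂_ν ξ^μ(x) ) + L(z(x)) Σ_ν ∂_ν ξ^ν(x) = 0. Then for all x the Noether identity holds: Σ_ν ∂_ν [ ( (∂L/∂p_ν)(z(·))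 η + L(z(·)) ξ^ν − (∂L/∂p_ν)(z(·)) Σ_μ ∂_μ φ · ξ^μ ) e^{−f} ](x) + e^{−f(x)} Σ_ν ( ∂_ν f(x) Σ_μ ∂_μ s^μ(x) − Σ_μ ∂_μ f(x) ∂_ν s^μ(x) ) ξ^ν(x) = 0. -/
/-- Partial derivative `∂_ν g` of a scalar field on `ℝ^d`. -/
noncomputable def pd {d : ℕ} (g : (Fin d → ℝ) → ℝ) (ν : Fin d) (x : Fin d → ℝ) : ℝ :=
  fderiv ℝ g x (Pi.single ν 1)

/-- `∂L/∂x^ν` for a Lagrangian `L(x, u, p, s)` on `ℝ^d × ℝ × ℝ^d × ℝ^d`. -/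
noncomputable def pLx {d : ℕ} (L : (Fin d → ℝ) × ℝ × (Fin d → ℝ) × (Fin d → ℝ) → ℝ)
    (ν : Fin d) (z : (Fin d → ℝ) × ℝ × (Fin d → ℝ) × (Fin d → ℝ)) : ℝ :=
  fderiv ℝ (fun y => L (y, z.2.1, z.2.2.1, z.2.2.2)) z.1 (Pi.single ν 1)

/-- `∂L/∂u` for a Lagrangian `L(x, u, p, s)`. -/
noncomputable def pLu {d : ℕ} (L : (Fin d → ℝ) × ℝ × (Fin d → ℝ) × (Fin d → ℝ) → ℝ)
    (z : (Fin d → ℝ) × ℝ × (Fin d → ℝ) × (Fin d → ℝ)) : ℝ :=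
  deriv (fun w => L (z.1, w, z.2.2.1, z.2.2.2)) z.2.1

/-- `∂L/∂p_ν` for a Lagrangian `L(x, u, p, s)`. -/
noncomputable def pLp {d : ℕ} (L : (Fin d → ℝ) × ℝ × (Fin d → ℝ) × (Fin d → ℝ) → ℝ)
    (ν : Fin d) (z : (Fin d → ℝ) × ℝ × (Fin d → ℝ) × (Fin d → ℝ)) : ℝ :=
  fderiv ℝ (fun q => L (z.1, z.2.1, q, z.2.2.2)) z.2.2.1 (Pi.single ν 1)

/-- `∂L/∂s_ν` for a Lagrangian `L(x, u, p, s)`. -/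
noncomputable def pLs {d : ℕ} (L : (Fin d → ℝ) × ℝ × (Fin d → ℝ) × (Fin d → ℝ) → ℝ)
    (ν : Fin d) (z : (Fin d → ℝ) × ℝ × (Fin d → ℝ) × (Fin d → ℝ)) : ℝ :=
  fderiv ℝ (fun w => L (z.1, z.2.1, z.2.2.1, w)) z.2.2.2 (Pi.single ν 1)

section helpers
variable {d : ℕ} {g h : (Fin d → ℝ) → ℝ} {ν : Fin d} {x : Fin d → ℝ}

lemma pd_of_hasFDerivAt {g' : (Fin d → ℝ) →L[ℝ] ℝ} (hg : HasFDerivAt g g' x) :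
    pd g ν x = g' (Pi.single ν 1) := by rw [pd, hg.fderiv]

lemma pd_add (hg : DifferentiableAt ℝ g x) (hh : DifferentiableAt ℝ h x) :
    pd (fun y => g y + h y) ν x = pd g ν x + pd h ν x := by
  simp [pd, fderiv_fun_add hg hh]

lemma pd_sub (hg : DifferentiableAt ℝ g x) (hh : DifferentiableAt ℝ h x) :
    pd (fun y => g y - h y) ν x = pd g ν x - pd h ν x := by
  simp [pd, fderiv_fun_sub hg hh]

lemma pd_mul (hg : DifferentiableAt ℝ g x) (hh : DifferentiableAt ℝ h x) :
    pd (fun y => g y * h y) ν x = pd g ν x * h x + g x * pd h ν x := by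
  simp only [pd, fderiv_fun_mul hg hh, ContinuousLinearMap.add_apply, ContinuousLinearMap.smul_apply,
    smul_eq_mul]
  ring

lemma pd_sum {ι : Type*} (t : Finset ι) (g : ι → (Fin d → ℝ) → ℝ)
    (hg : ∀ i ∈ t, DifferentiableAt ℝ (g i) x) :
    pd (fun y => ∑ i ∈ t, g i y) ν x = ∑ i ∈ t, pd (g i) ν x := by
  simp [pd, fderiv_fun_sum hg]

lemma pd_exp_neg (f : (Fin d → ℝ) → ℝ) (hf : DifferentiableAt ℝ f x) :
    pd (fun y => Real.exp (-f y)) ν x = -(Real.exp (-f x) * pd f ν x) := by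
  have h1 : HasFDerivAt (fun y => -f y) (-(fderiv ℝ f x)) x := hf.hasFDerivAt.neg
  have h2 : HasFDerivAt (fun y => Real.exp (-f y))
      (Real.exp (-f x) • -(fderiv ℝ f x)) x :=
    by have := (Real.hasDerivAt_exp (-f x)).comp_hasFDerivAt x h1; exact this
  rw [pd_of_hasFDerivAt h2]
  simp [pd]

end helpers

section quad
variable {d : ℕ} (L : (Fin d → ℝ) × ℝ × (Fin d → ℝ) × (Fin d → ℝ) → ℝ)
  {w : (Fin d → ℝ) × ℝ × (Fin d → ℝ) × (Fin d → ℝ)}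

lemma fderiv_quad_apply (hL : DifferentiableAt ℝ L w) (a : Fin d → ℝ) (b : ℝ) (c e : Fin d → ℝ) :
    fderiv ℝ L w (a, b, c, e) =
      (∑ ν, a ν * pLx L ν w) + b * pLu L w + (∑ ν, c ν * pLp L ν w)
        + (∑ ν, e ν * pLs L ν w) := by
  set T := fderiv ℝ L w with hT
  have hx : ∀ ν : Fin d, pLx L ν w = T ((Pi.single ν 1 : Fin d → ℝ), 0, 0, 0) := by
    intro ν
    have h1 : HasFDerivAt (fun y : Fin d → ℝ => (y, w.2.1, w.2.2.1, w.2.2.2))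
        ((ContinuousLinearMap.id ℝ (Fin d → ℝ)).prod 0) w.1 :=
      HasFDerivAt.prodMk (hasFDerivAt_id w.1) (hasFDerivAt_const _ _)
    have h2 : HasFDerivAt (fun y => L (y, w.2.1, w.2.2.1, w.2.2.2))
        (T.comp ((ContinuousLinearMap.id ℝ (Fin d → ℝ)).prod 0)) w.1 :=
      hL.hasFDerivAt.comp w.1 h1
    rw [pLx, h2.fderiv]; rfl
  have hu : pLu L w = T (0, 1, 0, 0) := by
    have h1 : HasFDerivAt (fun v : ℝ => (w.1, v, w.2.2.1, w.2.2.2))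
        ((0 : ℝ →L[ℝ] (Fin d → ℝ)).prod ((ContinuousLinearMap.id ℝ ℝ).prod 0)) w.2.1 :=
      HasFDerivAt.prodMk (hasFDerivAt_const _ _) (HasFDerivAt.prodMk (hasFDerivAt_id _) (hasFDerivAt_const _ _))
    have h2 : HasFDerivAt (fun v => L (w.1, v, w.2.2.1, w.2.2.2))
        (T.comp ((0 : ℝ →L[ℝ] (Fin d → ℝ)).prod ((ContinuousLinearMap.id ℝ ℝ).prod 0))) w.2.1 :=
      hL.hasFDerivAt.comp w.2.1 h1
    rw [pLu, h2.hasDerivAt.deriv]; rfl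
  have hp : ∀ ν : Fin d, pLp L ν w = T (0, 0, (Pi.single ν 1 : Fin d → ℝ), 0) := by
    intro ν
    have h1 : HasFDerivAt (fun q : Fin d → ℝ => (w.1, w.2.1, q, w.2.2.2))
        ((0 : (Fin d → ℝ) →L[ℝ] (Fin d → ℝ)).prod ((0 : (Fin d → ℝ) →L[ℝ] ℝ).prod
          ((ContinuousLinearMap.id ℝ (Fin d → ℝ)).prod 0))) w.2.2.1 :=
      HasFDerivAt.prodMk (hasFDerivAt_const _ _) (HasFDerivAt.prodMk (hasFDerivAt_const _ _)
        (HasFDerivAt.prodMk (hasFDerivAt_id _) (hasFDerivAt_const _ _)))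
    have h2 : HasFDerivAt (fun q => L (w.1, w.2.1, q, w.2.2.2))
        (T.comp ((0 : (Fin d → ℝ) →L[ℝ] (Fin d → ℝ)).prod ((0 : (Fin d → ℝ) →L[ℝ] ℝ).prod
          ((ContinuousLinearMap.id ℝ (Fin d → ℝ)).prod 0)))) w.2.2.1 :=
      hL.hasFDerivAt.comp w.2.2.1 h1
    rw [pLp, h2.fderiv]; rfl
  have hs : ∀ ν : Fin d, pLs L ν w = T (0, 0, 0, (Pi.single ν 1 : Fin d → ℝ)) := by
    intro ν
    have h1 : HasFDerivAt (fun v : Fin d → ℝ => (w.1, w.2.1, w.2.2.1, v))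
        ((0 : (Fin d → ℝ) →L[ℝ] (Fin d → ℝ)).prod ((0 : (Fin d → ℝ) →L[ℝ] ℝ).prod
          ((0 : (Fin d → ℝ) →L[ℝ] (Fin d → ℝ)).prod (ContinuousLinearMap.id ℝ (Fin d → ℝ))))) w.2.2.2 :=
      HasFDerivAt.prodMk (hasFDerivAt_const _ _) (HasFDerivAt.prodMk (hasFDerivAt_const _ _)
        (HasFDerivAt.prodMk (hasFDerivAt_const _ _) (hasFDerivAt_id _)))
    have h2 : HasFDerivAt (fun v => L (w.1, w.2.1, w.2.2.1, v))
        (T.comp ((0 : (Fin d → ℝ) →L[ℝ] (Fin d → ℝ)).prod ((0 : (Fin d → ℝ) →L[ℝ] ℝ).prod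
          ((0 : (Fin d → ℝ) →L[ℝ] (Fin d → ℝ)).prod (ContinuousLinearMap.id ℝ (Fin d → ℝ)))))) w.2.2.2 :=
      hL.hasFDerivAt.comp w.2.2.2 h1
    rw [pLs, h2.fderiv]; rfl
  have hvec : ∀ v : Fin d → ℝ, v = ∑ ν : Fin d, v ν • (Pi.single ν 1 : Fin d → ℝ) := by
    intro v
    have h : ∀ ν : Fin d, v ν • (Pi.single ν 1 : Fin d → ℝ) = Pi.single ν (v ν) := by
      intro ν; rw [← Pi.single_smul]; norm_num
    simp_rw [h, Finset.univ_sum_single]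
  have hsplit : ((a, b, c, e) : (Fin d → ℝ) × ℝ × (Fin d → ℝ) × (Fin d → ℝ))
      = (a, 0, 0, 0) + (0, b, 0, 0) + (0, 0, c, 0) + (0, 0, 0, e) := by
    simp [Prod.ext_iff]
  have ea : ((a, 0, 0, 0) : (Fin d → ℝ) × ℝ × (Fin d → ℝ) × (Fin d → ℝ))
      = ∑ ν : Fin d, a ν • (((Pi.single ν 1 : Fin d → ℝ), 0, 0, 0) : _) := by
    refine Prod.ext ?_ (Prod.ext ?_ (Prod.ext ?_ ?_)) <;>
      simp [Prod.fst_sum, Prod.snd_sum]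
    exact hvec a
  have ec : ((0, 0, c, 0) : (Fin d → ℝ) × ℝ × (Fin d → ℝ) × (Fin d → ℝ))
      = ∑ ν : Fin d, c ν • ((0, 0, (Pi.single ν 1 : Fin d → ℝ), 0) : _) := by
    refine Prod.ext ?_ (Prod.ext ?_ (Prod.ext ?_ ?_)) <;>
      simp [Prod.fst_sum, Prod.snd_sum]
    exact hvec c
  have ee : ((0, 0, 0, e) : (Fin d → ℝ) × ℝ × (Fin d → ℝ) × (Fin d → ℝ))
      = ∑ ν : Fin d, e ν • ((0, 0, 0, (Pi.single ν 1 : Fin d → ℝ)) : _) := by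
    refine Prod.ext ?_ (Prod.ext ?_ (Prod.ext ?_ ?_)) <;>
      simp [Prod.fst_sum, Prod.snd_sum]
    exact hvec e
  have eb : ((0, b, 0, 0) : (Fin d → ℝ) × ℝ × (Fin d → ℝ) × (Fin d → ℝ))
      = b • ((0, 1, 0, 0) : _) := by
    simp [Prod.ext_iff]
  rw [hsplit, map_add, map_add, map_add, ea, eb, ec, ee, map_sum, map_sum, map_sum, map_smul]
  simp only [map_smul, smul_eq_mul]
  simp only [hx, hu, hp, hs]

end quad

section chain

variable {d : ℕ} (φ : (Fin d → ℝ) → ℝ) (hφ : ContDiff ℝ 2 φ)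

lemma pd_pd_hasFDerivAt (hφ : ContDiff ℝ 2 φ) (μ : Fin d) (x : Fin d → ℝ) :
    HasFDerivAt (fun y => pd φ μ y)
      ((fderiv ℝ (fderiv ℝ φ) x).flip (Pi.single μ 1)) x := by
  have hdφ : ContDiff ℝ 1 (fderiv ℝ φ) := hφ.fderiv_right (le_refl 2)
  have h := ((hdφ.differentiable one_ne_zero) x).hasFDerivAt.clm_apply
    (hasFDerivAt_const (Pi.single μ 1 : Fin d → ℝ) x)
  simpa [pd] using h

lemma pd_pd_eq (hφ : ContDiff ℝ 2 φ) (μ ν : Fin d) (x : Fin d → ℝ) :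
    pd (fun y => pd φ μ y) ν x
      = fderiv ℝ (fderiv ℝ φ) x (Pi.single ν 1) (Pi.single μ 1) := by
  rw [show pd (fun y => pd φ μ y) ν x
      = ((fderiv ℝ (fderiv ℝ φ) x).flip (Pi.single μ 1)) (Pi.single ν 1) from
    (pd_pd_hasFDerivAt φ hφ μ x).fderiv ▸ rfl]
  rfl

lemma pd_pd_symm (hφ : ContDiff ℝ 2 φ) (μ ν : Fin d) (x : Fin d → ℝ) :
    pd (fun y => pd φ μ y) ν x = pd (fun y => pd φ ν y) μ x := by
  rw [pd_pd_eq φ hφ, pd_pd_eq φ hφ]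
  exact (hφ.contDiffAt.isSymmSndFDerivAt (by simp)) _ _

end chain

section chainrule
variable {d : ℕ}

lemma pd_s_eq (s : (Fin d → ℝ) → (Fin d → ℝ)) (hs : ContDiff ℝ 1 s) (μ ν : Fin d) (x : Fin d → ℝ) :
    pd (fun y => s y μ) ν x = fderiv ℝ s x (Pi.single ν 1) μ := by
  have h : HasFDerivAt (fun y => s y μ)
      ((ContinuousLinearMap.proj (R := ℝ) (φ := fun _ : Fin d => ℝ) μ).comp (fderiv ℝ s x)) x :=
    HasFDerivAt.comp (f := s) x
      (ContinuousLinearMap.proj (R := ℝ) (φ := fun _ : Fin d => ℝ) μ).hasFDerivAt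
      ((hs.differentiable one_ne_zero) x).hasFDerivAt
  rw [pd_of_hasFDerivAt h]; rfl

lemma pd_L_comp (L : (Fin d → ℝ) × ℝ × (Fin d → ℝ) × (Fin d → ℝ) → ℝ) (hL : ContDiff ℝ 1 L)
    (φ : (Fin d → ℝ) → ℝ) (hφ : ContDiff ℝ 2 φ)
    (s : (Fin d → ℝ) → (Fin d → ℝ)) (hs : ContDiff ℝ 1 s) (ν : Fin d) (x : Fin d → ℝ) :
    pd (fun y => L (y, φ y, fun μ => pd φ μ y, s y)) ν x =
      pLx L ν (x, φ x, fun μ => pd φ μ x, s x)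
      + pd φ ν x * pLu L (x, φ x, fun μ => pd φ μ x, s x)
      + (∑ μ, pd (fun y => pd φ μ y) ν x * pLp L μ (x, φ x, fun μ => pd φ μ x, s x))
      + (∑ μ, pd (fun y => s y μ) ν x * pLs L μ (x, φ x, fun μ => pd φ μ x, s x)) := by
  have hG : HasFDerivAt (fun y => (fun μ => pd φ μ y))
      (ContinuousLinearMap.pi fun μ => (fderiv ℝ (fderiv ℝ φ) x).flip (Pi.single μ 1)) x :=
    hasFDerivAt_pi.2 (fun μ => pd_pd_hasFDerivAt φ hφ μ x)
  have hz : HasFDerivAt (fun y => (y, φ y, (fun μ => pd φ μ y), s y))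
      ((ContinuousLinearMap.id ℝ (Fin d → ℝ)).prod ((fderiv ℝ φ x).prod
        ((ContinuousLinearMap.pi fun μ => (fderiv ℝ (fderiv ℝ φ) x).flip (Pi.single μ 1)).prod
          (fderiv ℝ s x)))) x :=
    HasFDerivAt.prodMk (hasFDerivAt_id x) (HasFDerivAt.prodMk (((hφ.differentiable two_ne_zero) x).hasFDerivAt)
      (HasFDerivAt.prodMk hG ((hs.differentiable one_ne_zero) x).hasFDerivAt))
  have hLz : HasFDerivAt (fun y => L (y, φ y, fun μ => pd φ μ y, s y))
      ((fderiv ℝ L (x, φ x, fun μ => pd φ μ x, s x)).comp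
        ((ContinuousLinearMap.id ℝ (Fin d → ℝ)).prod ((fderiv ℝ φ x).prod
          ((ContinuousLinearMap.pi fun μ => (fderiv ℝ (fderiv ℝ φ) x).flip (Pi.single μ 1)).prod
            (fderiv ℝ s x))))) x :=
    ((hL.differentiable one_ne_zero) _).hasFDerivAt.comp x hz
  rw [pd_of_hasFDerivAt hLz, ContinuousLinearMap.comp_apply]
  have harg : ((ContinuousLinearMap.id ℝ (Fin d → ℝ)).prod ((fderiv ℝ φ x).prod
      ((ContinuousLinearMap.pi fun μ => (fderiv ℝ (fderiv ℝ φ) x).flip (Pi.single μ 1)).prod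
        (fderiv ℝ s x)))) (Pi.single ν 1)
      = ((Pi.single ν 1 : Fin d → ℝ), fderiv ℝ φ x (Pi.single ν 1),
          (fun μ => fderiv ℝ (fderiv ℝ φ) x (Pi.single ν 1) (Pi.single μ 1)),
          fderiv ℝ s x (Pi.single ν 1)) := rfl
  rw [harg, fderiv_quad_apply L ((hL.differentiable one_ne_zero) _)]
  simp_rw [pd_pd_eq φ hφ, pd_s_eq s hs]
  have h1 : ∑ μ, (Pi.single ν 1 : Fin d → ℝ) μ * pLx L μ (x, φ x, fun μ => pd φ μ x, s x)
      = pLx L ν (x, φ x, fun μ => pd φ μ x, s x) := by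
    simp [Pi.single_apply]
  rw [h1]
  rfl

end chainrule


lemma noether_algebra {d : ℕ} (dP P X F φv ξ dη : Fin d → ℝ) (φ2 S dξ : Fin d → Fin d → ℝ)
    (ηv Λv U : ℝ)
    (hsymm : ∀ μ ν, φ2 μ ν = φ2 ν μ)
    (hEL : U - (∑ ν, dP ν) + (∑ ν, F ν * P ν) = 0)
    (hherg : (∑ ν, S ν ν) = Λv)
    (hinv : (∑ ν, X ν * ξ ν) + U * ηv
      + (∑ ν, P ν * (dη ν - ∑ μ, φv μ * dξ μ ν)) + Λv * (∑ ν, dξ ν ν) = 0) :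
    (∑ ν, ((dP ν * ηv + P ν * dη ν
        + (X ν + φv ν * U + (∑ μ, φ2 μ ν * P μ) + (∑ μ, S μ ν * F μ)) * ξ ν
        + Λv * dξ ν ν
        - (dP ν * (∑ μ, φv μ * ξ μ) + P ν * (∑ μ, (φ2 μ ν * ξ μ + φv μ * dξ μ ν))))
        - (P ν * ηv + Λv * ξ ν - P ν * (∑ μ, φv μ * ξ μ)) * F ν))
      + (∑ ν, (F ν * (∑ μ, S μ μ) - ∑ μ, F μ * S μ ν) * ξ ν) = 0 := by
  have hbody : ∀ ν : Fin d,
      ((dP ν * ηv + P ν * dη ν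
        + (X ν + φv ν * U + (∑ μ, φ2 μ ν * P μ) + (∑ μ, S μ ν * F μ)) * ξ ν
        + Λv * dξ ν ν
        - (dP ν * (∑ μ, φv μ * ξ μ) + P ν * (∑ μ, (φ2 μ ν * ξ μ + φv μ * dξ μ ν))))
        - (P ν * ηv + Λv * ξ ν - P ν * (∑ μ, φv μ * ξ μ)) * F ν)
      = dP ν * ηv + P ν * dη ν + X ν * ξ ν + (φv ν * ξ ν) * U
        + (∑ μ, φ2 μ ν * P μ) * ξ ν + (∑ μ, S μ ν * F μ) * ξ ν + Λv * dξ ν ν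
        - dP ν * (∑ μ, φv μ * ξ μ) - (∑ μ, P ν * (φ2 μ ν * ξ μ))
        - P ν * (∑ μ, φv μ * dξ μ ν)
        - ((F ν * P ν) * ηv + Λv * (F ν * ξ ν) - (F ν * P ν) * (∑ μ, φv μ * ξ μ)) := by
    intro ν
    rw [Finset.sum_add_distrib, ← Finset.mul_sum Finset.univ (fun μ => φ2 μ ν * ξ μ) (P ν)]
    ring
  rw [Finset.sum_congr rfl (fun ν _ => hbody ν)]
  simp only [Finset.sum_add_distrib, Finset.sum_sub_distrib]
  -- atom conversions
  rw [← Finset.sum_mul Finset.univ (fun ν => dP ν) ηv]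
  rw [← Finset.sum_mul Finset.univ (fun ν => φv ν * ξ ν) U]
  rw [← Finset.sum_mul Finset.univ (fun ν => dP ν) (∑ μ, φv μ * ξ μ)]
  rw [← Finset.mul_sum Finset.univ (fun ν => dξ ν ν) Λv]
  rw [← Finset.sum_mul Finset.univ (fun ν => F ν * P ν) ηv]
  rw [← Finset.mul_sum Finset.univ (fun ν => F ν * ξ ν) Λv]
  rw [← Finset.sum_mul Finset.univ (fun ν => F ν * P ν) (∑ μ, φv μ * ξ μ)]
  -- double sum swap
  have hDS : (∑ ν, (∑ μ, φ2 μ ν * P μ) * ξ ν) = ∑ ν, ∑ μ, P ν * (φ2 μ ν * ξ μ) := by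
    calc (∑ ν, (∑ μ, φ2 μ ν * P μ) * ξ ν)
        = ∑ ν, ∑ μ, φ2 μ ν * P μ * ξ ν := by
          exact Finset.sum_congr rfl fun ν _ => Finset.sum_mul _ _ _
      _ = ∑ μ, ∑ ν, φ2 μ ν * P μ * ξ ν := Finset.sum_comm
      _ = ∑ ν, ∑ μ, P ν * (φ2 μ ν * ξ μ) := by
          refine Finset.sum_congr rfl fun ν _ => Finset.sum_congr rfl fun μ _ => ?_
          rw [hsymm ν μ]; ring
  rw [hDS]
  -- invariance in split form
  have hinv' : (∑ ν, X ν * ξ ν) + U * ηv + ((∑ ν, P ν * dη ν)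
      - ∑ ν, P ν * (∑ μ, φv μ * dξ μ ν)) + Λv * (∑ ν, dξ ν ν) = 0 := by
    rw [← Finset.sum_sub_distrib]
    rw [show (∑ ν, (P ν * dη ν - P ν * (∑ μ, φv μ * dξ μ ν)))
        = ∑ ν, P ν * (dη ν - ∑ μ, φv μ * dξ μ ν) from
      Finset.sum_congr rfl fun ν _ => by ring]
    exact hinv
  -- last term split
  have hlast : (∑ ν, (F ν * (∑ μ, S μ μ) - ∑ μ, F μ * S μ ν) * ξ ν)
      = (∑ μ, S μ μ) * (∑ ν, F ν * ξ ν) - ∑ ν, (∑ μ, S μ ν * F μ) * ξ ν := by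
    rw [Finset.mul_sum, ← Finset.sum_sub_distrib]
    refine Finset.sum_congr rfl fun ν _ => ?_
    rw [show (∑ μ, F μ * S μ ν) = ∑ μ, S μ ν * F μ from
      Finset.sum_congr rfl fun μ _ => mul_comm _ _]
    ring
  rw [hlast, hherg]
  linear_combination hinv' + ((∑ μ, φv μ * ξ μ) - ηv) * hEL



/-- **The Noether identity for the Herglotz field problem.** Under the Herglotz field
setup, if `φ` satisfies the generalized Euler–Lagrange equation and the infinitesimal
invariance condition holds, then
`Σ_ν ∂_ν [(L_{p_ν} η + L ξ^ν − L_{p_ν} Σ_μ ∂_μφ ξ^μ) e^{−f}]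
  + e^{−f} Σ_ν (∂_ν f Σ_μ ∂_μ s^μ − Σ_μ ∂_μ f ∂_ν s^μ) ξ^ν = 0`. -/
theorem herglotz_noether_identity
    (d : ℕ) (L : (Fin d → ℝ) × ℝ × (Fin d → ℝ) × (Fin d → ℝ) → ℝ)
    (hL : ContDiff ℝ 1 L)
    (φ : (Fin d → ℝ) → ℝ) (hφ : ContDiff ℝ 2 φ)
    (s : (Fin d → ℝ) → (Fin d → ℝ)) (hs : ContDiff ℝ 1 s)
    (f : (Fin d → ℝ) → ℝ) (hf : ContDiff ℝ 1 f)
    (z : (Fin d → ℝ) → (Fin d → ℝ) × ℝ × (Fin d → ℝ) × (Fin d → ℝ))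
    (hz : z = fun x => (x, φ x, fun ν => pd φ ν x, s x))
    (herglotz : ∀ x, (∑ ν, pd (fun y => s y ν) ν x) = L (z x))
    (hgrad : ∀ (ν : Fin d) (x : Fin d → ℝ), pLs L ν (z x) = pd f ν x)
    (hdiff : ∀ ν : Fin d, Differentiable ℝ (fun x => pLp L ν (z x)))
    (hEL : ∀ x, pLu L (z x) - (∑ ν, pd (fun y => pLp L ν (z y)) ν x)
      + (∑ ν, pd f ν x * pLp L ν (z x)) = 0)
    (ξ : (Fin d → ℝ) → (Fin d → ℝ)) (hξ : ContDiff ℝ 1 ξ)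
    (η : (Fin d → ℝ) → ℝ) (hη : ContDiff ℝ 1 η)
    (hinv : ∀ x, (∑ ν, pLx L ν (z x) * ξ x ν) + pLu L (z x) * η x
      + (∑ ν, pLp L ν (z x) * (pd η ν x - ∑ μ, pd φ μ x * pd (fun y => ξ y μ) ν x))
      + L (z x) * (∑ ν, pd (fun y => ξ y ν) ν x) = 0) :
    ∀ x, (∑ ν, pd (fun y =>
        (pLp L ν (z y) * η y + L (z y) * ξ y ν
          - pLp L ν (z y) * (∑ μ, pd φ μ y * ξ y μ)) * Real.exp (-f y)) ν x)
      + Real.exp (-f x) * (∑ ν, (pd f ν x * (∑ μ, pd (fun y => s y μ) μ x)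
          - ∑ μ, pd f μ x * pd (fun y => s y μ) ν x) * ξ x ν) = 0 := by
  subst hz
  intro x
  beta_reduce
  beta_reduce at herglotz hgrad hdiff hEL hinv
  have Df : Differentiable ℝ f := hf.differentiable one_ne_zero
  have Dη : Differentiable ℝ η := hη.differentiable one_ne_zero
  have Dφμ : ∀ μ : Fin d, Differentiable ℝ (fun y => pd φ μ y) :=
    fun μ y => (pd_pd_hasFDerivAt φ hφ μ y).differentiableAt
  have Dξ : ∀ μ : Fin d, Differentiable ℝ (fun y => ξ y μ) :=
    fun μ => differentiable_pi.1 (hξ.differentiable one_ne_zero) μ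
  have Ds : Differentiable ℝ s := hs.differentiable one_ne_zero
  have Dgrad : Differentiable ℝ (fun y => (fun μ => pd φ μ y)) := differentiable_pi.2 Dφμ
  have Dz : Differentiable ℝ (fun y => (y, φ y, (fun μ => pd φ μ y), s y)) :=
    differentiable_fun_id.prodMk ((hφ.differentiable two_ne_zero).prodMk (Dgrad.prodMk Ds))
  have DΛ : Differentiable ℝ (fun y => L (y, φ y, fun μ => pd φ μ y, s y)) := (hL.differentiable one_ne_zero).comp Dz
  have DP : ∀ ν : Fin d, Differentiable ℝ (fun y => pLp L ν (y, φ y, fun μ => pd φ μ y, s y)) := fun ν => hdiff ν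
  have DW : Differentiable ℝ (fun y => ∑ μ, pd φ μ y * ξ y μ) :=
    Differentiable.fun_sum (fun μ _ => (Dφμ μ).mul (Dξ μ))
  have DE : Differentiable ℝ (fun y => Real.exp (-f y)) :=
    Real.differentiable_exp.comp Df.neg
  have DA : ∀ ν : Fin d, Differentiable ℝ (fun y => pLp L ν (y, φ y, fun μ => pd φ μ y, s y) * η y + L (y, φ y, fun μ => pd φ μ y, s y) * ξ y ν - pLp L ν (y, φ y, fun μ => pd φ μ y, s y) * (∑ μ, pd φ μ y * ξ y μ)) :=
    fun ν => (((DP ν).mul Dη).add (DΛ.mul (Dξ ν))).sub ((DP ν).mul DW)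
  have key : ∀ ν : Fin d, pd (fun y => (pLp L ν (y, φ y, fun μ => pd φ μ y, s y) * η y + L (y, φ y, fun μ => pd φ μ y, s y) * ξ y ν - pLp L ν (y, φ y, fun μ => pd φ μ y, s y) * (∑ μ, pd φ μ y * ξ y μ)) * Real.exp (-f y)) ν x
      = ((pd (fun y => pLp L ν (y, φ y, fun μ => pd φ μ y, s y)) ν x * η x + pLp L ν (x, φ x, fun μ => pd φ μ x, s x) * pd η ν x
        + (pLx L ν (x, φ x, fun μ => pd φ μ x, s x) + pd φ ν x * pLu L (x, φ x, fun μ => pd φ μ x, s x)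
            + (∑ μ, pd (fun y => pd φ μ y) ν x * pLp L μ (x, φ x, fun μ => pd φ μ x, s x))
            + (∑ μ, pd (fun y => s y μ) ν x * pd f μ x)) * ξ x ν
        + L (x, φ x, fun μ => pd φ μ x, s x) * pd (fun y => ξ y ν) ν x
        - (pd (fun y => pLp L ν (y, φ y, fun μ => pd φ μ y, s y)) ν x * (∑ μ, pd φ μ x * ξ x μ)
            + pLp L ν (x, φ x, fun μ => pd φ μ x, s x) * (∑ μ, (pd (fun y => pd φ μ y) ν x * ξ x μ
                + pd φ μ x * pd (fun y => ξ y μ) ν x))))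
        - (pLp L ν (x, φ x, fun μ => pd φ μ x, s x) * η x + L (x, φ x, fun μ => pd φ μ x, s x) * ξ x ν
            - pLp L ν (x, φ x, fun μ => pd φ μ x, s x) * (∑ μ, pd φ μ x * ξ x μ)) * pd f ν x) * Real.exp (-f x) := by
    intro ν
    have h1 : pd (fun y => (pLp L ν (y, φ y, fun μ => pd φ μ y, s y) * η y + L (y, φ y, fun μ => pd φ μ y, s y) * ξ y ν - pLp L ν (y, φ y, fun μ => pd φ μ y, s y) * (∑ μ, pd φ μ y * ξ y μ)) * Real.exp (-f y)) ν x
        = pd (fun y => pLp L ν (y, φ y, fun μ => pd φ μ y, s y) * η y + L (y, φ y, fun μ => pd φ μ y, s y) * ξ y ν - pLp L ν (y, φ y, fun μ => pd φ μ y, s y) * (∑ μ, pd φ μ y * ξ y μ)) ν x * Real.exp (-f x)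
          + (pLp L ν (x, φ x, fun μ => pd φ μ x, s x) * η x + L (x, φ x, fun μ => pd φ μ x, s x) * ξ x ν - pLp L ν (x, φ x, fun μ => pd φ μ x, s x) * (∑ μ, pd φ μ x * ξ x μ)) * pd (fun y => Real.exp (-f y)) ν x :=
      pd_mul ((DA ν) x) (DE x)
    have hE : pd (fun y => Real.exp (-f y)) ν x = -(Real.exp (-f x) * pd f ν x) :=
      pd_exp_neg f (Df x)
    have h2 : pd (fun y => pLp L ν (y, φ y, fun μ => pd φ μ y, s y) * η y + L (y, φ y, fun μ => pd φ μ y, s y) * ξ y ν - pLp L ν (y, φ y, fun μ => pd φ μ y, s y) * (∑ μ, pd φ μ y * ξ y μ)) ν x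
        = pd (fun y => pLp L ν (y, φ y, fun μ => pd φ μ y, s y) * η y + L (y, φ y, fun μ => pd φ μ y, s y) * ξ y ν) ν x
          - pd (fun y => pLp L ν (y, φ y, fun μ => pd φ μ y, s y) * (∑ μ, pd φ μ y * ξ y μ)) ν x :=
      pd_sub ((((DP ν).mul Dη).add (DΛ.mul (Dξ ν))) x) (((DP ν).mul DW) x)
    have h3 : pd (fun y => pLp L ν (y, φ y, fun μ => pd φ μ y, s y) * η y + L (y, φ y, fun μ => pd φ μ y, s y) * ξ y ν) ν x
        = pd (fun y => pLp L ν (y, φ y, fun μ => pd φ μ y, s y) * η y) ν x + pd (fun y => L (y, φ y, fun μ => pd φ μ y, s y) * ξ y ν) ν x :=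
      pd_add (((DP ν).mul Dη) x) ((DΛ.mul (Dξ ν)) x)
    have h4 : pd (fun y => pLp L ν (y, φ y, fun μ => pd φ μ y, s y) * η y) ν x
        = pd (fun y => pLp L ν (y, φ y, fun μ => pd φ μ y, s y)) ν x * η x + pLp L ν (x, φ x, fun μ => pd φ μ x, s x) * pd η ν x :=
      pd_mul ((DP ν) x) (Dη x)
    have h5 : pd (fun y => L (y, φ y, fun μ => pd φ μ y, s y) * ξ y ν) ν x
        = pd (fun y => L (y, φ y, fun μ => pd φ μ y, s y)) ν x * ξ x ν + L (x, φ x, fun μ => pd φ μ x, s x) * pd (fun y => ξ y ν) ν x :=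
      pd_mul (DΛ x) ((Dξ ν) x)
    have h6 : pd (fun y => pLp L ν (y, φ y, fun μ => pd φ μ y, s y) * (∑ μ, pd φ μ y * ξ y μ)) ν x
        = pd (fun y => pLp L ν (y, φ y, fun μ => pd φ μ y, s y)) ν x * (∑ μ, pd φ μ x * ξ x μ)
          + pLp L ν (x, φ x, fun μ => pd φ μ x, s x) * pd (fun y => ∑ μ, pd φ μ y * ξ y μ) ν x :=
      pd_mul ((DP ν) x) (DW x)
    have hW1 : pd (fun y => ∑ μ, pd φ μ y * ξ y μ) ν x
        = ∑ μ, pd (fun y => pd φ μ y * ξ y μ) ν x :=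
      pd_sum Finset.univ _ (fun μ _ => ((Dφμ μ).mul (Dξ μ)) x)
    have hW : pd (fun y => ∑ μ, pd φ μ y * ξ y μ) ν x
        = ∑ μ, (pd (fun y => pd φ μ y) ν x * ξ x μ + pd φ μ x * pd (fun y => ξ y μ) ν x) :=
      hW1.trans (Finset.sum_congr rfl fun μ _ => pd_mul ((Dφμ μ) x) ((Dξ μ) x))
    have hΛ : pd (fun y => L (y, φ y, fun μ => pd φ μ y, s y)) ν x
        = pLx L ν (x, φ x, fun μ => pd φ μ x, s x) + pd φ ν x * pLu L (x, φ x, fun μ => pd φ μ x, s x)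
          + (∑ μ, pd (fun y => pd φ μ y) ν x * pLp L μ (x, φ x, fun μ => pd φ μ x, s x))
          + (∑ μ, pd (fun y => s y μ) ν x * pd f μ x) := by
      rw [pd_L_comp L hL φ hφ s hs ν x]
      congr 1
      exact Finset.sum_congr rfl fun μ _ => by rw [hgrad μ x]
    rw [h1, hE, h2, h3, h4, h5, h6, hW, hΛ]
    ring
  have hsum : (∑ ν, pd (fun y => (pLp L ν (y, φ y, fun μ => pd φ μ y, s y) * η y + L (y, φ y, fun μ => pd φ μ y, s y) * ξ y ν - pLp L ν (y, φ y, fun μ => pd φ μ y, s y) * (∑ μ, pd φ μ y * ξ y μ)) * Real.exp (-f y)) ν x)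
      = (∑ ν, ((pd (fun y => pLp L ν (y, φ y, fun μ => pd φ μ y, s y)) ν x * η x + pLp L ν (x, φ x, fun μ => pd φ μ x, s x) * pd η ν x
        + (pLx L ν (x, φ x, fun μ => pd φ μ x, s x) + pd φ ν x * pLu L (x, φ x, fun μ => pd φ μ x, s x)
            + (∑ μ, pd (fun y => pd φ μ y) ν x * pLp L μ (x, φ x, fun μ => pd φ μ x, s x))
            + (∑ μ, pd (fun y => s y μ) ν x * pd f μ x)) * ξ x ν
        + L (x, φ x, fun μ => pd φ μ x, s x) * pd (fun y => ξ y ν) ν x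
        - (pd (fun y => pLp L ν (y, φ y, fun μ => pd φ μ y, s y)) ν x * (∑ μ, pd φ μ x * ξ x μ)
            + pLp L ν (x, φ x, fun μ => pd φ μ x, s x) * (∑ μ, (pd (fun y => pd φ μ y) ν x * ξ x μ
                + pd φ μ x * pd (fun y => ξ y μ) ν x))))
        - (pLp L ν (x, φ x, fun μ => pd φ μ x, s x) * η x + L (x, φ x, fun μ => pd φ μ x, s x) * ξ x ν
            - pLp L ν (x, φ x, fun μ => pd φ μ x, s x) * (∑ μ, pd φ μ x * ξ x μ)) * pd f ν x)) * Real.exp (-f x) := by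
    rw [Finset.sum_mul]
    exact Finset.sum_congr rfl fun ν _ => key ν
  rw [hsum]
  have h0 := noether_algebra (fun ν => pd (fun y => pLp L ν (y, φ y, fun μ => pd φ μ y, s y)) ν x)
    (fun ν => pLp L ν (x, φ x, fun μ => pd φ μ x, s x)) (fun ν => pLx L ν (x, φ x, fun μ => pd φ μ x, s x)) (fun ν => pd f ν x)
    (fun ν => pd φ ν x) (ξ x) (fun ν => pd η ν x)
    (fun μ ν => pd (fun y => pd φ μ y) ν x) (fun μ ν => pd (fun y => s y μ) ν x)
    (fun μ ν => pd (fun y => ξ y μ) ν x) (η x) (L (x, φ x, fun μ => pd φ μ x, s x)) (pLu L (x, φ x, fun μ => pd φ μ x, s x))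
    (fun μ ν => pd_pd_symm φ hφ μ ν x) (hEL x) (herglotz x) (hinv x)
  beta_reduce at h0
  linear_combination Real.exp (-f x) * h0
end

section
/- Let μ > 0 and T, γ ∈ ℝ. Let φ : ℝ² → ℝ (coordinates (t,x)) be of class C² and satisfy the damped wave equation μ ∂_{tt}φ − T ∂_{xx}φ + γ ∂_tφ = 0 on ℝ². Let s¹ : ℝ² → ℝ be of class C¹ and satisfy ∂_t s¹(t,x) = (μ/2)(∂_tφ)² − (T/2)(∂_xφ)² − (γ/μ)s¹(t,x). Then the local energy conservation law holds at every point: ∂_t[ ( (μ/2)(∂_tφ)² + (T/2)(∂_xφ)² + (γ/μ)s¹ ) e^{(γ/μ)t} ] − ∂_x[ T (∂_xφ)(∂_tφ) e^{(γ/μ)t} ] = 0. -/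
/-- Partial derivative `∂_t g` of a function on the `(t,x)` plane. -/
noncomputable def ptd (g : ℝ × ℝ → ℝ) (p : ℝ × ℝ) : ℝ :=
  deriv (fun τ => g (τ, p.2)) p.1

/-- Partial derivative `∂_x g` of a function on the `(t,x)` plane. -/
noncomputable def pxd (g : ℝ × ℝ → ℝ) (p : ℝ × ℝ) : ℝ :=
  deriv (fun y => g (p.1, y)) p.2

lemma slice_t {g : ℝ × ℝ → ℝ} {p : ℝ × ℝ} (hg : DifferentiableAt ℝ g p) :
    HasDerivAt (fun τ => g (τ, p.2)) (fderiv ℝ g p (1, 0)) p.1 := by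
  have hline : HasDerivAt (fun τ : ℝ => (τ, p.2)) ((1 : ℝ), (0 : ℝ)) p.1 :=
    (hasDerivAt_id p.1).prodMk (hasDerivAt_const p.1 p.2)
  have := hg.hasFDerivAt.comp_hasDerivAt p.1 (by simpa using hline)
  simpa [Function.comp_def] using this

lemma slice_x {g : ℝ × ℝ → ℝ} {p : ℝ × ℝ} (hg : DifferentiableAt ℝ g p) :
    HasDerivAt (fun y => g (p.1, y)) (fderiv ℝ g p (0, 1)) p.2 := by
  have hline : HasDerivAt (fun y : ℝ => (p.1, y)) ((0 : ℝ), (1 : ℝ)) p.2 :=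
    (hasDerivAt_const p.2 p.1).prodMk (hasDerivAt_id p.2)
  have := hg.hasFDerivAt.comp_hasDerivAt p.2 (by simpa using hline)
  simpa [Function.comp_def] using this

lemma ptd_eq {g : ℝ × ℝ → ℝ} {p : ℝ × ℝ} (hg : DifferentiableAt ℝ g p) :
    ptd g p = fderiv ℝ g p (1, 0) := (slice_t hg).deriv

lemma pxd_eq {g : ℝ × ℝ → ℝ} {p : ℝ × ℝ} (hg : DifferentiableAt ℝ g p) :
    pxd g p = fderiv ℝ g p (0, 1) := (slice_x hg).deriv

/-- **Local energy conservation for the damped vibrating string.** If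
`μ ∂_{tt}φ − T ∂_{xx}φ + γ ∂_tφ = 0` and `∂_t s¹ = (μ/2)(∂_tφ)² − (T/2)(∂_xφ)² − (γ/μ)s¹`,
then at every point
`∂_t[((μ/2)(∂_tφ)² + (T/2)(∂_xφ)² + (γ/μ)s¹)e^{(γ/μ)t}] − ∂_x[T(∂_xφ)(∂_tφ)e^{(γ/μ)t}] = 0`. -/
theorem vibrating_string_local_energy_conservation
    (μ T γ : ℝ) (hμ : 0 < μ)
    (φ : ℝ × ℝ → ℝ) (hφ : ContDiff ℝ 2 φ)
    (hwave : ∀ p : ℝ × ℝ, μ * ptd (ptd φ) p - T * pxd (pxd φ) p + γ * ptd φ p = 0)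
    (s1 : ℝ × ℝ → ℝ) (hs1 : ContDiff ℝ 1 s1)
    (hs1eq : ∀ p : ℝ × ℝ,
      ptd s1 p = μ / 2 * (ptd φ p) ^ 2 - T / 2 * (pxd φ p) ^ 2 - γ / μ * s1 p) :
    ∀ p : ℝ × ℝ,
      ptd (fun q => (μ / 2 * (ptd φ q) ^ 2 + T / 2 * (pxd φ q) ^ 2 + γ / μ * s1 q)
          * Real.exp (γ / μ * q.1)) p
        - pxd (fun q => T * pxd φ q * ptd φ q * Real.exp (γ / μ * q.1)) p = 0 := by
  intro p
  set a := γ / μ with ha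
  have hμ' : μ ≠ 0 := ne_of_gt hμ
  have hφd : Differentiable ℝ φ := hφ.differentiable (by norm_num)
  -- the derivative of the derivative
  have hf1 : ContDiff ℝ 1 (fderiv ℝ φ) := hφ.fderiv_right (by norm_num)
  have hf1d : Differentiable ℝ (fderiv ℝ φ) := hf1.differentiable one_ne_zero
  -- u = ptd φ, v = pxd φ as clm applications
  have hu_eq : ptd φ = fun q => fderiv ℝ φ q (1, 0) :=
    funext fun q => ptd_eq (hφd q)
  have hv_eq : pxd φ = fun q => fderiv ℝ φ q (0, 1) :=
    funext fun q => pxd_eq (hφd q)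
  have hu : ContDiff ℝ 1 (ptd φ) := by
    rw [hu_eq]; exact hf1.clm_apply contDiff_const
  have hv : ContDiff ℝ 1 (pxd φ) := by
    rw [hv_eq]; exact hf1.clm_apply contDiff_const
  have hud : Differentiable ℝ (ptd φ) := hu.differentiable one_ne_zero
  have hvd : Differentiable ℝ (pxd φ) := hv.differentiable one_ne_zero
  have hs1d : Differentiable ℝ s1 := hs1.differentiable one_ne_zero
  -- second derivative and Clairaut
  have hf2 : HasFDerivAt (fderiv ℝ φ) (fderiv ℝ (fderiv ℝ φ) p) p :=
    (hf1d p).hasFDerivAt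
  have hsym : ∀ w e : ℝ × ℝ,
      fderiv ℝ (fderiv ℝ φ) p w e = fderiv ℝ (fderiv ℝ φ) p e w :=
    second_derivative_symmetric (fun y => (hφd y).hasFDerivAt) hf2
  have happ : ∀ c : ℝ × ℝ,
      HasFDerivAt (fun q => fderiv ℝ φ q c)
        ((ContinuousLinearMap.apply ℝ ℝ c).comp (fderiv ℝ (fderiv ℝ φ) p)) p := by
    intro c
    exact (ContinuousLinearMap.apply ℝ ℝ c).hasFDerivAt.comp p hf2
  -- mixed partials agree
  have hmix : ptd (pxd φ) p = pxd (ptd φ) p := by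
    rw [ptd_eq (hvd p), pxd_eq (hud p), hu_eq, hv_eq,
      (happ (0, 1)).fderiv, (happ (1, 0)).fderiv]
    exact hsym (1, 0) (0, 1)
  -- abbreviations for values at p
  set u := ptd φ p with hu0
  set v := pxd φ p with hv0
  set ut := ptd (ptd φ) p with hut0
  set ux := pxd (ptd φ) p with hux0
  set vx := pxd (pxd φ) p with hvx0
  set st := ptd s1 p with hst0
  -- slices have derivatives
  have hu_t : HasDerivAt (fun τ => ptd φ (τ, p.2)) ut p.1 := by
    rw [hut0, ptd_eq (hud p)]; exact slice_t (hud p)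
  have hv_t : HasDerivAt (fun τ => pxd φ (τ, p.2)) ux p.1 := by
    have := slice_t (hvd p)
    rwa [← ptd_eq (hvd p), hmix] at this
  have hs_t : HasDerivAt (fun τ => s1 (τ, p.2)) st p.1 := by
    rw [hst0, ptd_eq (hs1d p)]; exact slice_t (hs1d p)
  have hu_x : HasDerivAt (fun y => ptd φ (p.1, y)) ux p.2 := by
    rw [hux0, pxd_eq (hud p)]; exact slice_x (hud p)
  have hv_x : HasDerivAt (fun y => pxd φ (p.1, y)) vx p.2 := by
    rw [hvx0, pxd_eq (hvd p)]; exact slice_x (hvd p)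
  -- exp slice
  have hexp : HasDerivAt (fun τ : ℝ => Real.exp (a * τ)) (a * Real.exp (a * p.1)) p.1 := by
    have := ((hasDerivAt_id p.1).const_mul a).exp
    simpa [mul_comm] using this
  -- the t-derivative of the energy-times-exp
  have hG : HasDerivAt
      (fun τ => (μ / 2 * (ptd φ (τ, p.2)) ^ 2 + T / 2 * (pxd φ (τ, p.2)) ^ 2
          + a * s1 (τ, p.2)) * Real.exp (a * τ))
      ((μ / 2 * (2 * u * ut) + T / 2 * (2 * v * ux) + a * st) * Real.exp (a * p.1)
        + (μ / 2 * u ^ 2 + T / 2 * v ^ 2 + a * s1 p) * (a * Real.exp (a * p.1))) p.1 := by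
    have hE : HasDerivAt
        (fun τ => μ / 2 * (ptd φ (τ, p.2)) ^ 2 + T / 2 * (pxd φ (τ, p.2)) ^ 2
            + a * s1 (τ, p.2))
        (μ / 2 * (2 * u * ut) + T / 2 * (2 * v * ux) + a * st) p.1 := by
      have h1 : HasDerivAt (fun τ => (ptd φ (τ, p.2)) ^ 2) (2 * u * ut) p.1 := by
        have := hu_t.pow 2
        simpa [Pi.pow_def, hu0, mul_comm, mul_assoc, mul_left_comm] using this
      have h2 : HasDerivAt (fun τ => (pxd φ (τ, p.2)) ^ 2) (2 * v * ux) p.1 := by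
        have := hv_t.pow 2
        simpa [Pi.pow_def, hv0, mul_comm, mul_assoc, mul_left_comm] using this
      exact ((h1.const_mul (μ / 2)).add (h2.const_mul (T / 2))).add (hs_t.const_mul a)
    have := hE.mul hexp
    simpa [Pi.mul_def] using this
  -- the x-derivative of the flux
  have hH : HasDerivAt
      (fun y => T * pxd φ (p.1, y) * ptd φ (p.1, y) * Real.exp (a * p.1))
      ((T * vx * u + T * v * ux) * Real.exp (a * p.1)) p.2 := by
    have h1 : HasDerivAt (fun y => T * pxd φ (p.1, y) * ptd φ (p.1, y))
        (T * vx * u + T * v * ux) p.2 := by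
      have := (hv_x.const_mul T).mul hu_x
      simpa [Pi.mul_def, hu0, hv0, mul_comm, mul_assoc, mul_left_comm, add_comm] using this
    have := h1.mul_const (Real.exp (a * p.1))
    simpa [mul_comm, mul_assoc, mul_left_comm, add_comm, add_mul] using this
  have hGd : ptd (fun q => (μ / 2 * (ptd φ q) ^ 2 + T / 2 * (pxd φ q) ^ 2 + a * s1 q)
      * Real.exp (a * q.1)) p =
      (μ / 2 * (2 * u * ut) + T / 2 * (2 * v * ux) + a * st) * Real.exp (a * p.1)
        + (μ / 2 * u ^ 2 + T / 2 * v ^ 2 + a * s1 p) * (a * Real.exp (a * p.1)) :=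
    hG.deriv
  have hHd : pxd (fun q => T * pxd φ q * ptd φ q * Real.exp (a * q.1)) p =
      (T * vx * u + T * v * ux) * Real.exp (a * p.1) :=
    hH.deriv
  rw [← ha] at *
  rw [hGd, hHd]
  have hw := hwave p
  have hs := hs1eq p
  simp only [← hu0, ← hv0, ← hut0, ← hvx0, ← hst0] at hw
  have hE : Real.exp (a * p.1) ≠ 0 := Real.exp_ne_zero _
  have haμ : a * μ = γ := div_mul_cancel₀ γ hμ'
  -- algebra
  have key : (μ / 2 * (2 * u * ut) + T / 2 * (2 * v * ux) + a * st)
      + (μ / 2 * u ^ 2 + T / 2 * v ^ 2 + a * s1 p) * a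
      - (T * vx * u + T * v * ux) = 0 := by
    have hγ : γ = a * μ := haμ.symm
    rw [hγ] at hw
    rw [hst0, hs, ← hu0, ← hv0]
    linear_combination u * hw
  linear_combination Real.exp (a * p.1) * key
end

section
/- Let μ > 0 and T, γ ∈ ℝ. Let φ : ℝ² → ℝ (coordinates (t,x)) be of class C² and satisfy the damped wave equation μ ∂_{tt}φ − T ∂_{xx}φ + γ ∂_tφ = 0 on ℝ². Let s¹, s² : ℝ² → ℝ be of class C¹ with ∂_t s¹ + ∂_x s² = (μ/2)(∂_tφ)² − (T/2)(∂_xφ)² − (γ/μ)s¹ and ∂_x s¹ = 0 everywhere. Then the local momentum conservation law holds at every point: ∂_t[ μ (∂_tφ)(∂_xφ) e^{(γ/μ)t} ] + ∂_x[ ( −(μ/2)(∂_tφ)² − (T/2)(∂_xφ)² + (γ/μ)s¹ ) e^{(γ/μ)t} ] = 0. -/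
private lemma hasDerivAt_fstSlice {g : ℝ × ℝ → ℝ} {g' : ℝ × ℝ →L[ℝ] ℝ} {p : ℝ × ℝ}
    (h : HasFDerivAt g g' p) :
    HasDerivAt (fun τ => g (τ, p.2)) (g' (1, 0)) p.1 := by
  have hc : HasDerivAt (fun τ : ℝ => ((τ, p.2) : ℝ × ℝ)) (1, 0) p.1 :=
    (hasDerivAt_id _).prodMk (hasDerivAt_const _ _)
  have h' : HasFDerivAt g g' (p.1, p.2) := by simpa using h
  exact h'.comp_hasDerivAt p.1 hc

private lemma hasDerivAt_sndSlice {g : ℝ × ℝ → ℝ} {g' : ℝ × ℝ →L[ℝ] ℝ} {p : ℝ × ℝ}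
    (h : HasFDerivAt g g' p) :
    HasDerivAt (fun y => g (p.1, y)) (g' (0, 1)) p.2 := by
  have hc : HasDerivAt (fun y : ℝ => ((p.1, y) : ℝ × ℝ)) (0, 1) p.2 :=
    (hasDerivAt_const _ _).prodMk (hasDerivAt_id _)
  have h' : HasFDerivAt g g' (p.1, p.2) := by simpa using h
  exact h'.comp_hasDerivAt p.2 hc

private lemma ptd_eq_fderiv {g : ℝ × ℝ → ℝ} {p : ℝ × ℝ} (h : DifferentiableAt ℝ g p) :
    ptd g p = fderiv ℝ g p (1, 0) :=
  (hasDerivAt_fstSlice h.hasFDerivAt).deriv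

private lemma pxd_eq_fderiv {g : ℝ × ℝ → ℝ} {p : ℝ × ℝ} (h : DifferentiableAt ℝ g p) :
    pxd g p = fderiv ℝ g p (0, 1) :=
  (hasDerivAt_sndSlice h.hasFDerivAt).deriv

/-- **Local momentum conservation for the damped vibrating string.** If
`μ ∂_{tt}φ − T ∂_{xx}φ + γ ∂_tφ = 0`,
`∂_t s¹ + ∂_x s² = (μ/2)(∂_tφ)² − (T/2)(∂_xφ)² − (γ/μ)s¹` and `∂_x s¹ = 0`, then
`∂_t[μ(∂_tφ)(∂_xφ)e^{(γ/μ)t}] + ∂_x[(−(μ/2)(∂_tφ)² − (T/2)(∂_xφ)² + (γ/μ)s¹)e^{(γ/μ)t}] = 0`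
at every point. -/
theorem vibrating_string_local_momentum_conservation
    (μ T γ : ℝ) (hμ : 0 < μ)
    (φ : ℝ × ℝ → ℝ) (hφ : ContDiff ℝ 2 φ)
    (hwave : ∀ p : ℝ × ℝ, μ * ptd (ptd φ) p - T * pxd (pxd φ) p + γ * ptd φ p = 0)
    (s1 s2 : ℝ × ℝ → ℝ) (hs1 : ContDiff ℝ 1 s1) (hs2 : ContDiff ℝ 1 s2)
    (hseq : ∀ p : ℝ × ℝ,
      ptd s1 p + pxd s2 p = μ / 2 * (ptd φ p) ^ 2 - T / 2 * (pxd φ p) ^ 2 - γ / μ * s1 p)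
    (hgauge : ∀ p : ℝ × ℝ, pxd s1 p = 0) :
    ∀ p : ℝ × ℝ,
      ptd (fun q => μ * ptd φ q * pxd φ q * Real.exp (γ / μ * q.1)) p
        + pxd (fun q => (-(μ / 2) * (ptd φ q) ^ 2 - T / 2 * (pxd φ q) ^ 2 + γ / μ * s1 q)
            * Real.exp (γ / μ * q.1)) p = 0 := by
  intro p
  have hμ' : μ ≠ 0 := ne_of_gt hμ
  have hφd : Differentiable ℝ φ := hφ.differentiable (by norm_num)
  have hf' : ContDiff ℝ 1 (fderiv ℝ φ) := hφ.fderiv_right (by norm_num)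
  have hf'd : Differentiable ℝ (fderiv ℝ φ) := hf'.differentiable one_ne_zero
  set ft : ℝ × ℝ → ℝ := fun q => fderiv ℝ φ q (1, 0) with hftdef
  set fx : ℝ × ℝ → ℝ := fun q => fderiv ℝ φ q (0, 1) with hfxdef
  have hft : ptd φ = ft := funext fun q => ptd_eq_fderiv (hφd q)
  have hfx : pxd φ = fx := funext fun q => pxd_eq_fderiv (hφd q)
  set A := fderiv ℝ (fderiv ℝ φ) p with hAdef
  have hA : HasFDerivAt (fderiv ℝ φ) A p := (hf'd p).hasFDerivAt
  have hftD : HasFDerivAt ft ((ContinuousLinearMap.apply ℝ ℝ ((1 : ℝ), (0 : ℝ))).comp A) p :=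
    (ContinuousLinearMap.apply ℝ ℝ ((1 : ℝ), (0 : ℝ))).hasFDerivAt.comp p hA
  have hfxD : HasFDerivAt fx ((ContinuousLinearMap.apply ℝ ℝ ((0 : ℝ), (1 : ℝ))).comp A) p :=
    (ContinuousLinearMap.apply ℝ ℝ ((0 : ℝ), (1 : ℝ))).hasFDerivAt.comp p hA
  have htt : HasDerivAt (fun τ => ft (τ, p.2)) (A (1, 0) (1, 0)) p.1 := by
    simpa using hasDerivAt_fstSlice hftD
  have hxt : HasDerivAt (fun τ => fx (τ, p.2)) (A (1, 0) (0, 1)) p.1 := by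
    simpa using hasDerivAt_fstSlice hfxD
  have htx : HasDerivAt (fun y => ft (p.1, y)) (A (0, 1) (1, 0)) p.2 := by
    simpa using hasDerivAt_sndSlice hftD
  have hxx : HasDerivAt (fun y => fx (p.1, y)) (A (0, 1) (0, 1)) p.2 := by
    simpa using hasDerivAt_sndSlice hfxD
  have hsymm : A (1, 0) (0, 1) = A (0, 1) (1, 0) :=
    second_derivative_symmetric (fun y => (hφd y).hasFDerivAt) hA _ _
  -- wave equation in terms of A
  have hw : μ * A (1, 0) (1, 0) - T * A (0, 1) (0, 1) + γ * ft p = 0 := by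
    have h := hwave p
    rw [hft, hfx] at h
    have e1 : ptd ft p = A (1, 0) (1, 0) := htt.deriv
    have e2 : pxd fx p = A (0, 1) (0, 1) := hxx.deriv
    rwa [e1, e2] at h
  -- s1 derivative in x vanishes
  have hs1x : HasDerivAt (fun y => s1 (p.1, y)) 0 p.2 := by
    have h := hasDerivAt_sndSlice (hs1.differentiable one_ne_zero p).hasFDerivAt
    have : fderiv ℝ s1 p (0, 1) = 0 := by
      rw [← pxd_eq_fderiv (hs1.differentiable one_ne_zero p)]; exact hgauge p
    rwa [this] at h
  -- exp derivative
  have hexp : HasDerivAt (fun τ : ℝ => Real.exp (γ / μ * τ))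
      (Real.exp (γ / μ * p.1) * (γ / μ * 1)) p.1 :=
    ((hasDerivAt_id p.1).const_mul (γ / μ)).exp
  -- first term
  have h1 : HasDerivAt (fun τ => μ * ft (τ, p.2) * fx (τ, p.2) * Real.exp (γ / μ * τ))
      ((μ * A (1, 0) (1, 0) * fx (p.1, p.2) + μ * ft (p.1, p.2) * A (1, 0) (0, 1))
          * Real.exp (γ / μ * p.1)
        + μ * ft (p.1, p.2) * fx (p.1, p.2) * (Real.exp (γ / μ * p.1) * (γ / μ * 1))) p.1 :=
    ((htt.const_mul μ).mul hxt).mul hexp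
  -- second term
  have h2 : HasDerivAt (fun y => (-(μ / 2) * ft (p.1, y) ^ 2 - T / 2 * fx (p.1, y) ^ 2
        + γ / μ * s1 (p.1, y)) * Real.exp (γ / μ * p.1))
      ((-(μ / 2) * ((2 : ℕ) * ft (p.1, p.2) ^ 1 * A (0, 1) (1, 0))
          - T / 2 * ((2 : ℕ) * fx (p.1, p.2) ^ 1 * A (0, 1) (0, 1))
          + γ / μ * 0) * Real.exp (γ / μ * p.1)) p.2 :=
    ((((htx.pow 2).const_mul (-(μ / 2))).sub ((hxx.pow 2).const_mul (T / 2))).add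
        (hs1x.const_mul (γ / μ))).mul_const _
  simp only [hft, hfx]
  have e1 : ptd (fun q => μ * ft q * fx q * Real.exp (γ / μ * q.1)) p
      = (μ * A (1, 0) (1, 0) * fx (p.1, p.2) + μ * ft (p.1, p.2) * A (1, 0) (0, 1))
          * Real.exp (γ / μ * p.1)
        + μ * ft (p.1, p.2) * fx (p.1, p.2) * (Real.exp (γ / μ * p.1) * (γ / μ * 1)) := h1.deriv
  have e2 : pxd (fun q => (-(μ / 2) * ft q ^ 2 - T / 2 * fx q ^ 2 + γ / μ * s1 q)
        * Real.exp (γ / μ * q.1)) p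
      = (-(μ / 2) * ((2 : ℕ) * ft (p.1, p.2) ^ 1 * A (0, 1) (1, 0))
          - T / 2 * ((2 : ℕ) * fx (p.1, p.2) ^ 1 * A (0, 1) (0, 1))
          + γ / μ * 0) * Real.exp (γ / μ * p.1) := h2.deriv
  rw [e1, e2]
  have hγ : γ / μ * μ = γ := div_mul_cancel₀ γ hμ'
  have hp : (p.1, p.2) = p := rfl
  rw [hp, hsymm]
  linear_combination Real.exp (γ / μ * p.1) * fx p * hw
    + Real.exp (γ / μ * p.1) * ft p * fx p * hγ
end

section
/- Let m, l > 0 and g, γ ∈ ℝ. Let θ, φ : ℝ → ℝ be of class C² satisfying ml² θ'' + γ l θ' − ml² sinθ cosθ (φ')² + mgl sinθ = 0 and (d/dt)[ ml² sin²θ φ' ] + γ l sin²θ φ' = 0, and let S : ℝ → ℝ be of class C¹ with S'(t) = (ml²/2)( θ'(t)² + sin²(θ(t)) φ'(t)² ) + mgl cos(θ(t)) − (γ/(ml)) S(t). Then the function t ↦ H(t) e^{(γ/(ml))t} is constant, where H(t) = (ml²/2)( θ'(t)² + sin²(θ(t)) φ'(t)² ) − mgl cos(θ(t)) + (γ/(ml))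 S(t) is the Hamiltonian (total energy) of the dissipative spherical pendulum. -/
/-- **Noether conserved quantity under time translations for the dissipative spherical
pendulum.** Along solutions of the equations of motion with
`S' = (ml²/2)(θ'² + sin²θ φ'²) + mgl cosθ − (γ/(ml))S`, the quantity `H(t)e^{(γ/(ml))t}`
is constant, where `H = (ml²/2)(θ'² + sin²θ φ'²) − mgl cosθ + (γ/(ml))S` is the total
energy. -/
theorem spherical_pendulum_noether_time_translation
    (m l g γ : ℝ) (hm : 0 < m) (hl : 0 < l)
    (θ φ : ℝ → ℝ) (hθ : ContDiff ℝ 2 θ) (hφ : ContDiff ℝ 2 φ)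
    (hθeq : ∀ t, m * l ^ 2 * deriv (deriv θ) t + γ * l * deriv θ t
      - m * l ^ 2 * Real.sin (θ t) * Real.cos (θ t) * deriv φ t ^ 2
      + m * g * l * Real.sin (θ t) = 0)
    (hφeq : ∀ t, deriv (fun τ => m * l ^ 2 * Real.sin (θ τ) ^ 2 * deriv φ τ) t
      + γ * l * Real.sin (θ t) ^ 2 * deriv φ t = 0)
    (S : ℝ → ℝ) (hS : ContDiff ℝ 1 S)
    (hSeq : ∀ t, HasDerivAt S
      (m * l ^ 2 / 2 * (deriv θ t ^ 2 + Real.sin (θ t) ^ 2 * deriv φ t ^ 2)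
        + m * g * l * Real.cos (θ t) - γ / (m * l) * S t) t)
    (H : ℝ → ℝ)
    (hH : H = fun t =>
      m * l ^ 2 / 2 * (deriv θ t ^ 2 + Real.sin (θ t) ^ 2 * deriv φ t ^ 2)
        - m * g * l * Real.cos (θ t) + γ / (m * l) * S t) :
    ∀ t₁ t₂ : ℝ,
      H t₁ * Real.exp (γ / (m * l) * t₁) = H t₂ * Real.exp (γ / (m * l) * t₂) := by
  have hm0 : m ≠ 0 := hm.ne'
  have hl0 : l ≠ 0 := hl.ne'
  set c : ℝ := γ / (m * l) with hc
  clear_value c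
  have hcm : c * (m * l) = γ := by rw [hc]; field_simp
  have h2 : ContDiff ℝ ((1 : ℕ∞) + 1) θ := by norm_num; exact hθ
  have h2φ : ContDiff ℝ ((1 : ℕ∞) + 1) φ := by norm_num; exact hφ
  have hθ1 : Differentiable ℝ θ := hθ.differentiable (by norm_num)
  have hφ1 : Differentiable ℝ φ := hφ.differentiable (by norm_num)
  have hθd : Differentiable ℝ (deriv θ) :=
    (contDiff_succ_iff_deriv.mp h2).2.2.differentiable (by simp)
  have hφd : Differentiable ℝ (deriv φ) :=
    (contDiff_succ_iff_deriv.mp h2φ).2.2.differentiable (by simp)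
  have key : ∀ t : ℝ, HasDerivAt (fun τ => H τ * Real.exp (c * τ)) 0 t := by
    intro t
    set a := deriv θ t
    set b := deriv φ t
    set A := deriv (deriv θ) t
    have hθt : HasDerivAt θ a t := (hθ1 t).hasDerivAt
    have hθ't : HasDerivAt (deriv θ) A t := (hθd t).hasDerivAt
    have hφt : HasDerivAt φ b t := (hφ1 t).hasDerivAt
    have hφ't : HasDerivAt (deriv φ) (deriv (deriv φ) t) t := (hφd t).hasDerivAt
    set B := deriv (deriv φ) t
    have hsin : HasDerivAt (fun τ => Real.sin (θ τ)) (Real.cos (θ t) * a) t :=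
      (Real.hasDerivAt_sin (θ t)).comp t hθt
    have hcos : HasDerivAt (fun τ => Real.cos (θ τ)) (-Real.sin (θ t) * a) t :=
      (Real.hasDerivAt_cos (θ t)).comp t hθt
    have hsin2 : HasDerivAt (fun τ => Real.sin (θ τ) ^ 2)
        (2 * Real.sin (θ t) ^ 1 * (Real.cos (θ t) * a)) t := hsin.pow 2
    have hf : HasDerivAt (fun τ => m * l ^ 2 * Real.sin (θ τ) ^ 2 * deriv φ τ)
        ((m * l ^ 2 * (2 * Real.sin (θ t) ^ 1 * (Real.cos (θ t) * a))) * b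
          + m * l ^ 2 * Real.sin (θ t) ^ 2 * B) t :=
      (hsin2.const_mul (m * l ^ 2)).mul hφ't
    have E2 : (m * l ^ 2 * (2 * Real.sin (θ t) ^ 1 * (Real.cos (θ t) * a))) * b
          + m * l ^ 2 * Real.sin (θ t) ^ 2 * B
          + γ * l * Real.sin (θ t) ^ 2 * b = 0 := by
      have := hφeq t
      rw [hf.deriv] at this
      linarith
    have E1 := hθeq t
    have hK : HasDerivAt (fun τ => m * l ^ 2 / 2 * (deriv θ τ ^ 2 + Real.sin (θ τ) ^ 2 * deriv φ τ ^ 2))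
        (m * l ^ 2 / 2 * ((2 * a ^ 1 * A) + ((2 * Real.sin (θ t) ^ 1 * (Real.cos (θ t) * a)) * b ^ 2 + Real.sin (θ t) ^ 2 * (2 * b ^ 1 * B)))) t :=
      ((hθ't.pow 2).add (hsin2.mul (hφ't.pow 2))).const_mul _
    have hHt : HasDerivAt H
        (m * l ^ 2 / 2 * ((2 * a ^ 1 * A) + ((2 * Real.sin (θ t) ^ 1 * (Real.cos (θ t) * a)) * b ^ 2 + Real.sin (θ t) ^ 2 * (2 * b ^ 1 * B)))
          - m * g * l * (-Real.sin (θ t) * a)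
          + c * (m * l ^ 2 / 2 * (a ^ 2 + Real.sin (θ t) ^ 2 * b ^ 2)
            + m * g * l * Real.cos (θ t) - c * S t)) t := by
      rw [hH]
      exact (hK.sub (hcos.const_mul (m * g * l))).add ((hSeq t).const_mul c)
    have hexp : HasDerivAt (fun τ => Real.exp (c * τ)) (Real.exp (c * t) * c) t := by
      simpa using (((hasDerivAt_id t).const_mul c).exp)
    have hsum : m * l ^ 2 * (a * A) + m * l ^ 2 * Real.sin (θ t) ^ 2 * (b * B)
        + γ * l * (a ^ 2 + Real.sin (θ t) ^ 2 * b ^ 2)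
        + m * l ^ 2 * Real.sin (θ t) * Real.cos (θ t) * (a * b ^ 2)
        + m * g * l * Real.sin (θ t) * a = 0 := by
      linear_combination a * E1 + b * E2
    have hG := hHt.mul hexp
    convert hG using 1
    · rfl
    · rfl
    · rfl
    simp only [hH]
    linear_combination (-(Real.exp (c * t))) * hsum
      + (-(Real.exp (c * t) * l * (a ^ 2 + Real.sin (θ t) ^ 2 * b ^ 2))) * hcm
  have hdiff : Differentiable ℝ (fun τ => H τ * Real.exp (c * τ)) :=
    fun t => ((key t).differentiableAt)
  intro t₁ t₂
  exact is_const_of_deriv_eq_zero hdiff (fun t => (key t).deriv) t₁ t₂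
end

section
/- Let m, l > 0 and g, γ ∈ ℝ. Let θ, φ : ℝ → ℝ be of class C² satisfying ml² θ'' + γ l θ' − ml² sinθ cosθ (φ')² + mgl sinθ = 0 and (d/dt)[ ml² sin²θ φ' ] + γ l sin²θ φ' = 0, and let S : ℝ → ℝ be of class C¹ with S'(t) = (ml²/2)( θ'² + sin²θ (φ')² ) + mgl cosθ − (γ/(ml)) S and S(0) = 0. Then the total energy E(t) := (ml²/2)( θ'(t)² + sin²(θ(t)) φ'(t)² ) − mgl cos(θ(t)) + (γ/(ml)) S(t) satisfies E(t) = E₀ e^{−(γ/(ml)) t} for all t, where E₀ = (ml²/2)( θ'(0)² + sin²(θ(0)) φ'(0)² ) − mgl cos(θ(0)) is the initial mechanical energy; i.e. the total energy decreases exponentially with time. -/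
/-- If `E' = c·E` everywhere then `E t = E 0 · exp (c t)`. -/
lemma exp_decay_aux {E : ℝ → ℝ} {c : ℝ} (h : ∀ t, HasDerivAt E (c * E t) t) :
    ∀ t, E t = E 0 * Real.exp (c * t) := by
  have key : ∀ s, HasDerivAt (fun τ => E τ * Real.exp (-c * τ)) 0 s := by
    intro s
    have hexp : HasDerivAt (fun τ : ℝ => Real.exp (-c * τ)) (Real.exp (-c * s) * (-c)) s := by
      simpa using ((hasDerivAt_id s).const_mul (-c)).exp
    have : HasDerivAt (fun τ => E τ * Real.exp (-c * τ))
        (c * E s * Real.exp (-c * s) + E s * (Real.exp (-c * s) * -c)) s := (h s).mul hexp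
    convert this using 1
    ring
  have hconst : ∀ x y : ℝ, E x * Real.exp (-c * x) = E y * Real.exp (-c * y) := by
    apply is_const_of_deriv_eq_zero
    · exact fun x => ((key x).differentiableAt)
    · exact fun x => (key x).deriv
  intro t
  have h0 := hconst t 0
  simp only [mul_zero, Real.exp_zero, mul_one] at h0
  calc E t = E t * Real.exp (-c * t) * Real.exp (c * t) := by
        rw [mul_assoc, ← Real.exp_add]; ring_nf; simp
    _ = E 0 * Real.exp (c * t) := by rw [h0]

/-- **Exponential decay of the total energy of the dissipative spherical pendulum.**
Along solutions of the equations of motion with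
`S' = (ml²/2)(θ'² + sin²θ φ'²) + mgl cosθ − (γ/(ml))S` and `S(0) = 0`, the total energy
`E(t) = (ml²/2)(θ'² + sin²θ φ'²) − mgl cosθ + (γ/(ml))S` satisfies
`E(t) = E₀ e^{−(γ/(ml))t}`, where `E₀` is the initial mechanical energy. -/
theorem spherical_pendulum_energy_decay
    (m l g γ : ℝ) (hm : 0 < m) (hl : 0 < l)
    (θ φ : ℝ → ℝ) (hθ : ContDiff ℝ 2 θ) (hφ : ContDiff ℝ 2 φ)
    (hθeq : ∀ t, m * l ^ 2 * deriv (deriv θ) t + γ * l * deriv θ t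
      - m * l ^ 2 * Real.sin (θ t) * Real.cos (θ t) * deriv φ t ^ 2
      + m * g * l * Real.sin (θ t) = 0)
    (hφeq : ∀ t, deriv (fun τ => m * l ^ 2 * Real.sin (θ τ) ^ 2 * deriv φ τ) t
      + γ * l * Real.sin (θ t) ^ 2 * deriv φ t = 0)
    (S : ℝ → ℝ) (hS : ContDiff ℝ 1 S)
    (hSeq : ∀ t, HasDerivAt S
      (m * l ^ 2 / 2 * (deriv θ t ^ 2 + Real.sin (θ t) ^ 2 * deriv φ t ^ 2)
        + m * g * l * Real.cos (θ t) - γ / (m * l) * S t) t)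
    (hS0 : S 0 = 0)
    (E : ℝ → ℝ)
    (hE : E = fun t =>
      m * l ^ 2 / 2 * (deriv θ t ^ 2 + Real.sin (θ t) ^ 2 * deriv φ t ^ 2)
        - m * g * l * Real.cos (θ t) + γ / (m * l) * S t)
    (E₀ : ℝ)
    (hE₀ : E₀ = m * l ^ 2 / 2 * (deriv θ 0 ^ 2 + Real.sin (θ 0) ^ 2 * deriv φ 0 ^ 2)
      - m * g * l * Real.cos (θ 0)) :
    ∀ t : ℝ, E t = E₀ * Real.exp (-(γ / (m * l)) * t) := by
  have hml : m * l ≠ 0 := by positivity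
  have hθ1 : ContDiff ℝ 1 (deriv θ) := (contDiff_succ_iff_deriv.mp (by exact_mod_cast hθ : ContDiff ℝ (1+1) θ)).2.2
  have hφ1 : ContDiff ℝ 1 (deriv φ) := (contDiff_succ_iff_deriv.mp (by exact_mod_cast hφ : ContDiff ℝ (1+1) φ)).2.2
  have hE' : ∀ t, HasDerivAt E (-(γ / (m * l)) * E t) t := by
    intro t
    have hu : HasDerivAt θ (deriv θ t) t :=
      (hθ.differentiable (by norm_num) t).hasDerivAt
    have hu' : HasDerivAt (deriv θ) (deriv (deriv θ) t) t :=
      (hθ1.differentiable one_ne_zero t).hasDerivAt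
    have hv : HasDerivAt φ (deriv φ t) t :=
      (hφ.differentiable (by norm_num) t).hasDerivAt
    have hv' : HasDerivAt (deriv φ) (deriv (deriv φ) t) t :=
      (hφ1.differentiable one_ne_zero t).hasDerivAt
    have hsin : HasDerivAt (fun τ => Real.sin (θ τ)) (Real.cos (θ t) * deriv θ t) t :=
      (Real.hasDerivAt_sin (θ t)).comp t hu
    have hcos : HasDerivAt (fun τ => Real.cos (θ τ)) (-Real.sin (θ t) * deriv θ t) t :=
      (Real.hasDerivAt_cos (θ t)).comp t hu
    -- expand the φ equation
    have hprod : HasDerivAt (fun τ => m * l ^ 2 * Real.sin (θ τ) ^ 2 * deriv φ τ)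
        ((m * l ^ 2 * (2 * Real.sin (θ t) ^ 1 * (Real.cos (θ t) * deriv θ t))) * deriv φ t
          + m * l ^ 2 * Real.sin (θ t) ^ 2 * deriv (deriv φ) t) t :=
      ((hsin.pow 2).const_mul (m * l ^ 2)).mul hv'
    have h2 := hφeq t
    rw [hprod.deriv] at h2
    have h1 := hθeq t
    have hD : HasDerivAt E
        (m * l ^ 2 / 2 * ((2 * deriv θ t ^ 1 * deriv (deriv θ) t)
            + ((2 * Real.sin (θ t) ^ 1 * (Real.cos (θ t) * deriv θ t)) * deriv φ t ^ 2
              + Real.sin (θ t) ^ 2 * (2 * deriv φ t ^ 1 * deriv (deriv φ) t)))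
          - m * g * l * (-Real.sin (θ t) * deriv θ t)
          + γ / (m * l) * (m * l ^ 2 / 2 * (deriv θ t ^ 2 + Real.sin (θ t) ^ 2 * deriv φ t ^ 2)
              + m * g * l * Real.cos (θ t) - γ / (m * l) * S t)) t := by
      rw [hE]
      exact ((((hu'.pow 2).add ((hsin.pow 2).mul (hv'.pow 2))).const_mul
        (m * l ^ 2 / 2)).sub (hcos.const_mul (m * g * l))).add ((hSeq t).const_mul (γ / (m * l)))
    convert hD using 1
    rw [hE]
    field_simp
    linear_combination (-2 * m ^ 2 * l ^ 2 * deriv θ t) * h1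
      + (-2 * m ^ 2 * l ^ 2 * deriv φ t) * h2
  have := exp_decay_aux hE'
  intro t
  rw [this t]
  have hE0 : E 0 = E₀ := by simp [hE, hS0, hE₀]
  rw [hE0]
end
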